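/- arXiv:2107.09620 — 3 statements merged into one kernel-verified Lean document; each statement's English description precedes it below -/
import Mathlib

section
/- Let n and m be positive integers, let a ≥ 1 be an integer with 2m(a+1) < n, and let δ > 0. Then there exists C > 0 (depending only on n, m, a, δ) such that for all distinct u₀, u₁ ∈ ℝⁿ, ∫_{ℝⁿ} (⟨u₀−u⟩^{(n+1)/2 − 2ma} / |u₀−u|^{n−2ma}) · ⟨u⟩^{−(n+1)/2 − δ} · (⟨u−u₁⟩^{(n+1)/2 − 2m} / |u−u₁|^{n−2m}) du ≤ C ⟨u₀−u₁⟩^{(n+1)/2 − 2m(a+1)} / |u₀−u₁|^{n−2m(a+1)}. -/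
open MeasureTheory Real Set

open Metric Module
open scoped ENNReal NNReal

noncomputable section


variable {n : ℕ}

abbrev Esp (n : ℕ) := EuclideanSpace ℝ (Fin n)

lemma lint_smul (f : (EuclideanSpace ℝ (Fin n)) → ℝ≥0∞) (hf : Measurable f) {c : ℝ}
    (hc : 0 < c) :
    ∫⁻ x : Esp n, f (c • x) = ENNReal.ofReal ((c ^ n)⁻¹) * ∫⁻ x : Esp n, f x := by
  rw [← lintegral_map hf (measurable_const_smul c),
    Measure.map_addHaar_smul volume hc.ne', lintegral_smul_measure]
  congr 1
  rw [finrank_euclideanSpace_fin, abs_of_nonneg (by positivity)]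

lemma radial_rescale {S T : Set (Esp n)} (hS : MeasurableSet S) (hT : MeasurableSet T)
    (e : ℝ) {ρ : ℝ} (hρ : 0 < ρ) (v : Esp n)
    (hST : ∀ u : Esp n, u ∈ T ↔ ρ⁻¹ • (u - v) ∈ S) :
    ∫⁻ u : Esp n in T, ENNReal.ofReal (‖u - v‖ ^ e)
      = ENNReal.ofReal (ρ ^ (e + (n : ℝ))) *
        ∫⁻ x : Esp n in S, ENNReal.ofReal (‖x‖ ^ e) := by
  set F : Esp n → ℝ≥0∞ := fun x => S.indicator (fun x => ENNReal.ofReal (‖x‖ ^ e)) x with hF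
  have hFm : Measurable F := by
    apply Measurable.indicator _ hS
    exact (measurable_norm.pow_const _).ennreal_ofReal
  have key : ∀ u : Esp n, (T.indicator (fun u => ENNReal.ofReal (‖u - v‖ ^ e)) u)
      = ENNReal.ofReal (ρ ^ e) * F (ρ⁻¹ • (u - v)) := by
    intro u
    by_cases hu : u ∈ T
    · simp only [F]
      rw [Set.indicator_of_mem hu, Set.indicator_of_mem ((hST u).mp hu)]
      rw [← ENNReal.ofReal_mul (by positivity), norm_smul, norm_inv, Real.norm_eq_abs,
        abs_of_pos hρ, Real.mul_rpow (by positivity) (norm_nonneg _), ← mul_assoc,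
        ← Real.mul_rpow hρ.le (by positivity),
        mul_inv_cancel₀ hρ.ne', Real.one_rpow, one_mul]
    · simp only [F]
      rw [Set.indicator_of_notMem hu,
        Set.indicator_of_notMem (fun h => hu ((hST u).mpr h)), mul_zero]
  rw [← lintegral_indicator hT]
  simp_rw [key]
  have hg : Measurable fun u : Esp n => F (ρ⁻¹ • (u - v)) :=
    hFm.comp ((measurable_id.sub measurable_const).const_smul ρ⁻¹)
  rw [lintegral_const_mul _ hg]
  have htrans : ∫⁻ u : Esp n, F (ρ⁻¹ • (u - v)) = ∫⁻ u : Esp n, F (ρ⁻¹ • u) := by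
    have := lintegral_add_right_eq_self (μ := (volume : Measure (Esp n)))
      (fun u => F (ρ⁻¹ • u)) (-v)
    simp only [← sub_eq_add_neg] at this
    exact this
  rw [htrans, lint_smul F hFm (by positivity), lintegral_indicator hS]
  rw [← mul_assoc, ← ENNReal.ofReal_mul (by positivity)]
  congr 2
  rw [Real.rpow_add hρ, Real.rpow_natCast]
  rw [inv_pow, inv_inv]

lemma mem_ball_iff_smul {v : Esp n} {ρ : ℝ} (hρ : 0 < ρ) (u : Esp n) :
    u ∈ ball v ρ ↔ ρ⁻¹ • (u - v) ∈ ball (0 : Esp n) 1 := by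
  rw [mem_ball_iff_norm, mem_ball_zero_iff, norm_smul, norm_inv, Real.norm_eq_abs,
    abs_of_pos hρ, inv_mul_eq_div, div_lt_one hρ]

lemma ball_finite (hn : 1 ≤ n) {σ : ℝ} (hσ : 0 < σ) (hσn : σ < (n : ℝ)) :
    ∫⁻ x : Esp n in ball 0 1, ENNReal.ofReal (‖x‖ ^ (σ - (n : ℝ))) < ⊤ := by
  set b : ℝ := 2⁻¹ with hb
  have hb0 : (0:ℝ) < b := by norm_num [hb]
  have hb1 : b < 1 := by norm_num [hb]
  set A : ℕ → Set (Esp n) := fun k => ball 0 (b ^ k) \ ball 0 (b ^ (k + 1)) with hA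
  have cover : ball (0 : Esp n) 1 ⊆ {0} ∪ ⋃ k, A k := by
    intro x hx
    rcases eq_or_ne x 0 with rfl | hx0
    · exact Or.inl rfl
    · refine Or.inr ?_
      have hxpos : 0 < ‖x‖ := norm_pos_iff.mpr hx0
      have hx1 : ‖x‖ < 1 := mem_ball_zero_iff.mp hx
      have hex : ∃ k : ℕ, b ^ (k + 1) ≤ ‖x‖ := by
        obtain ⟨j, hj⟩ := exists_pow_lt_of_lt_one hxpos hb1
        exact ⟨j, le_of_lt (lt_of_le_of_lt
          (pow_le_pow_of_le_one hb0.le hb1.le (Nat.le_succ j)) hj)⟩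
      set k := Nat.find hex with hk
      refine mem_iUnion.mpr ⟨k, ?_, ?_⟩
      · rw [mem_ball_zero_iff]
        rcases Nat.eq_zero_or_pos k with hk0 | hk0
        · simpa [hk0] using hx1
        · have := Nat.find_min hex (m := k - 1) (by omega)
          push_neg at this
          have hkk : k - 1 + 1 = k := by omega
          rwa [hkk] at this
      · intro hmem
        exact absurd (mem_ball_zero_iff.mp hmem) (not_lt.mpr (Nat.find_spec hex))
  have hAm : ∀ k, MeasurableSet (A k) := fun k =>
    measurableSet_ball.diff measurableSet_ball
  set V : ℝ≥0∞ := volume (ball (0 : Esp n) 1) with hV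
  have hVfin : V < ⊤ := measure_ball_lt_top
  have hAk : ∀ k, (∫⁻ x : Esp n in A k, ENNReal.ofReal (‖x‖ ^ (σ - (n:ℝ))))
      ≤ ENNReal.ofReal (b ^ (σ - (n:ℝ))) * ENNReal.ofReal (b ^ σ) ^ k * V := by
    intro k
    have hpt : ∀ x ∈ A k, ENNReal.ofReal (‖x‖ ^ (σ - (n:ℝ)))
        ≤ ENNReal.ofReal ((b ^ (k+1)) ^ (σ - (n:ℝ))) := by
      intro x hx
      apply ENNReal.ofReal_le_ofReal
      apply Real.rpow_le_rpow_of_nonpos (by positivity)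
      · exact not_lt.mp fun h => hx.2 (mem_ball_zero_iff.mpr h)
      · linarith
    calc (∫⁻ x : Esp n in A k, ENNReal.ofReal (‖x‖ ^ (σ - (n:ℝ))))
        ≤ ∫⁻ _x : Esp n in A k, ENNReal.ofReal ((b ^ (k+1)) ^ (σ - (n:ℝ))) :=
          setLIntegral_mono' (hAm k) hpt
      _ = ENNReal.ofReal ((b ^ (k+1)) ^ (σ - (n:ℝ))) * volume (A k) := by
          rw [setLIntegral_const]
      _ ≤ ENNReal.ofReal ((b ^ (k+1)) ^ (σ - (n:ℝ))) * (ENNReal.ofReal ((b ^ k) ^ n) * V) := by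
          gcongr
          calc volume (A k) ≤ volume (ball (0 : Esp n) (b ^ k)) := measure_mono diff_subset
            _ = ENNReal.ofReal ((b ^ k) ^ n) * V := by
                rw [hV, Measure.addHaar_ball_of_pos volume (0 : Esp n)
                  (by positivity : (0:ℝ) < b ^ k), finrank_euclideanSpace_fin]
      _ = ENNReal.ofReal (b ^ (σ - (n:ℝ))) * ENNReal.ofReal (b ^ σ) ^ k * V := by
          have hreal : ((b : ℝ) ^ (k+1)) ^ (σ - (n:ℝ)) * ((b : ℝ) ^ k) ^ (n : ℕ)
              = b ^ (σ - (n:ℝ)) * (b ^ σ) ^ k := by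
            rw [← Real.rpow_natCast b (k+1), ← Real.rpow_natCast b k,
              ← Real.rpow_mul hb0.le, ← Real.rpow_natCast (b ^ (k : ℝ)) n,
              ← Real.rpow_mul hb0.le, ← Real.rpow_natCast (b ^ σ) k,
              ← Real.rpow_mul hb0.le, ← Real.rpow_add hb0, ← Real.rpow_add hb0]
            congr 1
            push_cast
            ring
          rw [← mul_assoc, ← ENNReal.ofReal_pow (by positivity),
            ← ENNReal.ofReal_mul (by positivity), hreal,
            ENNReal.ofReal_mul (by positivity)]
  calc (∫⁻ x : Esp n in ball 0 1, ENNReal.ofReal (‖x‖ ^ (σ - (n:ℝ))))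
      ≤ ∫⁻ x : Esp n in {0} ∪ ⋃ k, A k, ENNReal.ofReal (‖x‖ ^ (σ - (n:ℝ))) :=
        lintegral_mono_set cover
    _ ≤ (∫⁻ x : Esp n in {0}, ENNReal.ofReal (‖x‖ ^ (σ - (n:ℝ))))
        + ∫⁻ x : Esp n in ⋃ k, A k, ENNReal.ofReal (‖x‖ ^ (σ - (n:ℝ))) :=
        lintegral_union_le _ _ _
    _ < ⊤ := by
        apply ENNReal.add_lt_top.mpr
        constructor
        · rw [lintegral_singleton]
          simp only [norm_zero]
          rw [Real.zero_rpow (by linarith)]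
          simp
        · calc (∫⁻ x : Esp n in ⋃ k, A k, ENNReal.ofReal (‖x‖ ^ (σ - (n:ℝ))))
              ≤ ∑' k, ∫⁻ x : Esp n in A k, ENNReal.ofReal (‖x‖ ^ (σ - (n:ℝ))) :=
                lintegral_iUnion_le _ _
            _ ≤ ∑' k, ENNReal.ofReal (b ^ (σ - (n:ℝ))) * ENNReal.ofReal (b ^ σ) ^ k * V :=
                ENNReal.tsum_le_tsum hAk
            _ = ENNReal.ofReal (b ^ (σ - (n:ℝ))) * V * ∑' k, ENNReal.ofReal (b ^ σ) ^ k := by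
                rw [← ENNReal.tsum_mul_left]
                congr 1; ext k; ring
            _ < ⊤ := by
                apply ENNReal.mul_lt_top
                · exact ENNReal.mul_lt_top ENNReal.ofReal_lt_top hVfin
                · rw [ENNReal.tsum_geometric]
                  apply ENNReal.inv_lt_top.mpr
                  rw [tsub_pos_iff_lt]
                  apply ENNReal.ofReal_lt_one.mpr
                  exact Real.rpow_lt_one hb0.le hb1 hσ

lemma ext_finite {τ : ℝ} (hτ : (n : ℝ) < τ) :
    ∫⁻ x : Esp n in (ball (0 : Esp n) 1)ᶜ, ENNReal.ofReal (‖x‖ ^ (-τ)) < ⊤ := by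
  have hτ0 : 0 < τ := lt_of_le_of_lt (Nat.cast_nonneg n) hτ
  have hpt : ∀ x ∈ (ball (0 : Esp n) 1)ᶜ, ENNReal.ofReal (‖x‖ ^ (-τ))
      ≤ ENNReal.ofReal ((2:ℝ) ^ τ * (1 + ‖x‖) ^ (-τ)) := by
    intro x hx
    have h1 : (1:ℝ) ≤ ‖x‖ := not_lt.mp fun h => hx (mem_ball_zero_iff.mpr h)
    apply ENNReal.ofReal_le_ofReal
    have hhalf : (1 + ‖x‖) / 2 ≤ ‖x‖ := by linarith
    calc ‖x‖ ^ (-τ) ≤ ((1 + ‖x‖) / 2) ^ (-τ) :=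
          Real.rpow_le_rpow_of_nonpos (by positivity) hhalf (by linarith)
      _ = (2:ℝ) ^ τ * (1 + ‖x‖) ^ (-τ) := by
          rw [Real.div_rpow (by positivity) (by norm_num), Real.rpow_neg (by norm_num : (0:ℝ) ≤ 2)]
          field_simp
  calc (∫⁻ x : Esp n in (ball (0 : Esp n) 1)ᶜ, ENNReal.ofReal (‖x‖ ^ (-τ)))
      ≤ ∫⁻ x : Esp n in (ball (0 : Esp n) 1)ᶜ, ENNReal.ofReal ((2:ℝ) ^ τ * (1 + ‖x‖) ^ (-τ)) :=
        setLIntegral_mono' measurableSet_ball.compl hpt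
    _ ≤ ∫⁻ x : Esp n, ENNReal.ofReal ((2:ℝ) ^ τ * (1 + ‖x‖) ^ (-τ)) :=
        setLIntegral_le_lintegral _ _
    _ = ENNReal.ofReal ((2:ℝ) ^ τ) * ∫⁻ x : Esp n, ENNReal.ofReal ((1 + ‖x‖) ^ (-τ)) := by
        simp_rw [ENNReal.ofReal_mul (by positivity : (0:ℝ) ≤ (2:ℝ) ^ τ)]
        exact lintegral_const_mul _ (by fun_prop)
    _ < ⊤ := ENNReal.mul_lt_top ENNReal.ofReal_lt_top
        (finite_integral_one_add_norm (by rw [finrank_euclideanSpace_fin]; exact hτ))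

lemma I1 (hn : 1 ≤ n) {σ : ℝ} (hσ : 0 < σ) (hσn : σ < (n : ℝ)) :
    ∃ Bc : ℝ≥0∞, Bc ≠ ⊤ ∧ ∀ (v : Esp n) (ρ : ℝ), 0 < ρ →
      (∫⁻ u : Esp n in ball v ρ, ENNReal.ofReal (‖u - v‖ ^ (σ - (n : ℝ))))
        = ENNReal.ofReal (ρ ^ σ) * Bc := by
  refine ⟨∫⁻ x : Esp n in ball 0 1, ENNReal.ofReal (‖x‖ ^ (σ - (n:ℝ))),
    (ball_finite hn hσ hσn).ne, fun v ρ hρ => ?_⟩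
  rw [radial_rescale measurableSet_ball measurableSet_ball (σ - (n:ℝ)) hρ v
    (mem_ball_iff_smul hρ)]
  congr 2
  ring

lemma I2 {τ : ℝ} (hτ : (n : ℝ) < τ) :
    ∃ Cc : ℝ≥0∞, Cc ≠ ⊤ ∧ ∀ (v : Esp n) (ρ : ℝ), 0 < ρ →
      (∫⁻ u : Esp n in (ball v ρ)ᶜ, ENNReal.ofReal (‖u - v‖ ^ (-τ)))
        = ENNReal.ofReal (ρ ^ ((n : ℝ) - τ)) * Cc := by
  refine ⟨∫⁻ x : Esp n in (ball (0 : Esp n) 1)ᶜ, ENNReal.ofReal (‖x‖ ^ (-τ)),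
    (ext_finite hτ).ne, fun v ρ hρ => ?_⟩
  rw [radial_rescale measurableSet_ball.compl measurableSet_ball.compl (-τ) hρ v
    (fun u => not_iff_not.mpr (mem_ball_iff_smul hρ u))]
  congr 2
  ring

-- pointwise real lemmas about the Japanese bracket of a real t
lemma g_one_le (t : ℝ) : 1 ≤ Real.sqrt (1 + t ^ 2) := by
  have h := Real.sq_sqrt (show (0:ℝ) ≤ 1 + t ^ 2 by positivity)
  nlinarith [Real.sqrt_nonneg (1 + t ^ 2)]

lemma t_le_g {t : ℝ} (h0 : 0 ≤ t) : t ≤ Real.sqrt (1 + t ^ 2) := by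
  have h := Real.sq_sqrt (show (0:ℝ) ≤ 1 + t ^ 2 by positivity)
  nlinarith [Real.sqrt_nonneg (1 + t ^ 2)]

lemma g_le_two {t : ℝ} (h32 : t ≤ 2) (h0 : 0 ≤ t) :
    Real.sqrt (1 + t ^ 2) ≤ Real.sqrt 5 := by
  apply Real.sqrt_le_sqrt
  nlinarith

lemma g_le_sqrt5 {t : ℝ} (h : 1/2 ≤ t) : Real.sqrt (1 + t ^ 2) ≤ Real.sqrt 5 * t := by
  rw [show Real.sqrt 5 * t = Real.sqrt 5 * Real.sqrt (t ^ 2) by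
    rw [Real.sqrt_sq (by linarith)], ← Real.sqrt_mul (by norm_num)]
  exact Real.sqrt_le_sqrt (by nlinarith)

lemma g_le_sqrt2_mul {t : ℝ} (h : 1 ≤ t) : Real.sqrt (1 + t ^ 2) ≤ Real.sqrt 2 * t := by
  rw [show Real.sqrt 2 * t = Real.sqrt 2 * Real.sqrt (t ^ 2) by
    rw [Real.sqrt_sq (by linarith)], ← Real.sqrt_mul (by norm_num)]
  exact Real.sqrt_le_sqrt (by nlinarith)

lemma g_le_one_add {t : ℝ} (h0 : 0 ≤ t) : Real.sqrt (1 + t ^ 2) ≤ 1 + t := by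
  have h := Real.sq_sqrt (show (0:ℝ) ≤ 1 + t ^ 2 by positivity)
  nlinarith [Real.sqrt_nonneg (1 + t ^ 2)]

lemma one_add_le_sqrt2_g (t : ℝ) (h0 : 0 ≤ t) :
    1 + t ≤ Real.sqrt 2 * Real.sqrt (1 + t ^ 2) := by
  have h := Real.sq_sqrt (show (0:ℝ) ≤ 1 + t ^ 2 by positivity)
  have h2 := Real.sq_sqrt (show (0:ℝ) ≤ 2 by norm_num)
  have h3 : (Real.sqrt 2 * Real.sqrt (1 + t ^ 2)) ^ 2 = 2 * (1 + t ^ 2) := by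
    rw [mul_pow, h, h2]
  nlinarith [mul_nonneg (Real.sqrt_nonneg (2:ℝ)) (Real.sqrt_nonneg (1 + t ^ 2)),
    sq_nonneg (1 - t)]

lemma rpow_le_max_one {b c : ℝ} (hb : 1 ≤ b) (hbc : b ≤ c) (p : ℝ) :
    b ^ p ≤ max 1 (c ^ p) := by
  rcases le_total 0 p with hp | hp
  · exact le_max_of_le_right (Real.rpow_le_rpow (by linarith) hbc hp)
  · exact le_max_of_le_left (Real.rpow_le_one_of_one_le_of_nonpos hb hp)

-- g^p ≤ C * t^p  for t ≥ 1/2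
lemma g_rpow_le {t : ℝ} (h : 1/2 ≤ t) (p : ℝ) :
    Real.sqrt (1 + t ^ 2) ^ p ≤ max 1 (Real.sqrt 5 ^ p) * t ^ p := by
  rcases le_total 0 p with hp | hp
  · calc Real.sqrt (1 + t ^ 2) ^ p ≤ (Real.sqrt 5 * t) ^ p :=
        Real.rpow_le_rpow (Real.sqrt_nonneg _) (g_le_sqrt5 h) hp
      _ = Real.sqrt 5 ^ p * t ^ p := Real.mul_rpow (Real.sqrt_nonneg _) (by linarith)
      _ ≤ max 1 (Real.sqrt 5 ^ p) * t ^ p := by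
          apply mul_le_mul_of_nonneg_right (le_max_right _ _) (Real.rpow_nonneg (by linarith) _)
  · calc Real.sqrt (1 + t ^ 2) ^ p ≤ t ^ p :=
        Real.rpow_le_rpow_of_nonpos (by linarith) (t_le_g (by linarith)) hp
      _ ≤ max 1 (Real.sqrt 5 ^ p) * t ^ p :=
        le_mul_of_one_le_left (Real.rpow_nonneg (by linarith) _) (le_max_left _ _)

-- r^e ≤ C ⟨r⟩^e for r ≥ 1
lemma t_rpow_le_g {t : ℝ} (h : 1 ≤ t) (e : ℝ) :
    t ^ e ≤ max 1 (Real.sqrt 2 ^ (-e)) * Real.sqrt (1 + t ^ 2) ^ e := by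
  rcases le_total 0 e with he | he
  · calc t ^ e ≤ Real.sqrt (1 + t ^ 2) ^ e :=
        Real.rpow_le_rpow (by linarith) (t_le_g (by linarith)) he
      _ ≤ _ := le_mul_of_one_le_left (Real.rpow_nonneg (Real.sqrt_nonneg _) _) (le_max_left _ _)
  · have h1 : Real.sqrt (1 + t ^ 2) ^ e ≥ (Real.sqrt 2 * t) ^ e := by
      apply Real.rpow_le_rpow_of_nonpos (by positivity) (g_le_sqrt2_mul h) he
    calc t ^ e = Real.sqrt 2 ^ (-e) * (Real.sqrt 2 ^ e * t ^ e) := by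
          rw [← mul_assoc, ← Real.rpow_add (by positivity), neg_add_cancel, Real.rpow_zero, one_mul]
      _ = Real.sqrt 2 ^ (-e) * (Real.sqrt 2 * t) ^ e := by
          rw [Real.mul_rpow (Real.sqrt_nonneg _) (by linarith)]
      _ ≤ Real.sqrt 2 ^ (-e) * Real.sqrt (1 + t ^ 2) ^ e := by
          apply mul_le_mul_of_nonneg_left h1 (Real.rpow_nonneg (Real.sqrt_nonneg _) _)
      _ ≤ _ := by
          apply mul_le_mul_of_nonneg_right (le_max_right _ _)
            (Real.rpow_nonneg (Real.sqrt_nonneg _) _)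

-- ⟨r⟩^e bounded below for r ≤ 1
lemma one_le_c_g {t : ℝ} (h0 : 0 ≤ t) (h : t ≤ 1) (e : ℝ) :
    1 ≤ max 1 (Real.sqrt 2 ^ (-e)) * Real.sqrt (1 + t ^ 2) ^ e := by
  rcases le_total 0 e with he | he
  · have : (1:ℝ) ≤ Real.sqrt (1 + t ^ 2) ^ e :=
      Real.one_le_rpow (g_one_le t) he
    calc (1:ℝ) ≤ 1 * Real.sqrt (1 + t ^ 2) ^ e := by linarith
      _ ≤ _ := mul_le_mul_of_nonneg_right (le_max_left _ _) (by positivity)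
  · have hg2 : Real.sqrt (1 + t ^ 2) ≤ Real.sqrt 2 := by
      apply Real.sqrt_le_sqrt; nlinarith
    have h1 : Real.sqrt 2 ^ e ≤ Real.sqrt (1 + t ^ 2) ^ e :=
      Real.rpow_le_rpow_of_nonpos (by positivity) hg2 he
    calc (1:ℝ) = Real.sqrt 2 ^ (-e) * Real.sqrt 2 ^ e := by
          rw [← Real.rpow_add (by positivity), neg_add_cancel, Real.rpow_zero]
      _ ≤ Real.sqrt 2 ^ (-e) * Real.sqrt (1 + t ^ 2) ^ e :=
          mul_le_mul_of_nonneg_left h1 (Real.rpow_nonneg (Real.sqrt_nonneg _) _)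
      _ ≤ _ := mul_le_mul_of_nonneg_right (le_max_right _ _) (Real.rpow_nonneg (Real.sqrt_nonneg _) _)

-- kernel bound near singularity
lemma KB1 {t : ℝ} (h0 : 0 ≤ t) (h32 : t ≤ 2) {q : ℝ} (hq : 0 < q) (p : ℝ) :
    Real.sqrt (1 + t ^ 2) ^ p / t ^ q ≤ max 1 (Real.sqrt 5 ^ p) * t ^ (-q) := by
  rcases eq_or_lt_of_le h0 with rfl | ht
  · simp [Real.zero_rpow hq.ne', Real.zero_rpow (show -q ≠ 0 by intro h; exact hq.ne' (by linarith))]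
  · rw [div_eq_mul_inv, ← Real.rpow_neg ht.le]
    apply mul_le_mul_of_nonneg_right _ (Real.rpow_nonneg ht.le _)
    exact rpow_le_max_one (g_one_le t) (g_le_two h32 h0) p

-- kernel bound away from singularity, decreasing power pulled to ρ
lemma KB2 {t ρ : ℝ} (hhalf : 1/2 ≤ t) (hρt : ρ ≤ t) (hρ0 : 0 < ρ) {p q : ℝ} (hpq : p - q ≤ 0) :
    Real.sqrt (1 + t ^ 2) ^ p / t ^ q ≤ max 1 (Real.sqrt 5 ^ p) * ρ ^ (p - q) := by
  have ht0 : (0:ℝ) < t := by linarith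
  rw [div_eq_mul_inv, ← Real.rpow_neg ht0.le]
  calc Real.sqrt (1 + t ^ 2) ^ p * t ^ (-q)
      ≤ (max 1 (Real.sqrt 5 ^ p) * t ^ p) * t ^ (-q) :=
        mul_le_mul_of_nonneg_right (g_rpow_le hhalf p) (Real.rpow_nonneg ht0.le _)
    _ = max 1 (Real.sqrt 5 ^ p) * t ^ (p - q) := by
        rw [mul_assoc, ← Real.rpow_add ht0]; ring_nf
    _ ≤ max 1 (Real.sqrt 5 ^ p) * ρ ^ (p - q) := by
        apply mul_le_mul_of_nonneg_left
          (Real.rpow_le_rpow_of_nonpos hρ0 hρt hpq)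
          (le_trans zero_le_one (le_max_left _ _))

-- kernel bound away from singularity, bracket decay
lemma KB3 {t : ℝ} (hhalf : 1/2 ≤ t) {q : ℝ} (hq : 0 ≤ q) (p : ℝ) :
    Real.sqrt (1 + t ^ 2) ^ p / t ^ q
      ≤ (max 1 (Real.sqrt 2 ^ (-p)) * 3 ^ q) * (1 + t) ^ (p - q) := by
  have ht0 : (0:ℝ) < t := by linarith
  have h1t : (0:ℝ) < 1 + t := by linarith
  have hgp : Real.sqrt (1 + t ^ 2) ^ p ≤ max 1 (Real.sqrt 2 ^ (-p)) * (1 + t) ^ p := by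
    rcases le_total 0 p with hp | hp
    · calc Real.sqrt (1 + t ^ 2) ^ p ≤ (1 + t) ^ p :=
          Real.rpow_le_rpow (Real.sqrt_nonneg _) (g_le_one_add ht0.le) hp
        _ ≤ _ := le_mul_of_one_le_left (Real.rpow_nonneg h1t.le _) (le_max_left _ _)
    · have hd : (1 + t) / Real.sqrt 2 ≤ Real.sqrt (1 + t ^ 2) := by
        rw [div_le_iff₀ (by positivity)]
        calc 1 + t ≤ Real.sqrt 2 * Real.sqrt (1 + t ^ 2) := one_add_le_sqrt2_g t ht0.le
          _ = Real.sqrt (1 + t ^ 2) * Real.sqrt 2 := mul_comm _ _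
      calc Real.sqrt (1 + t ^ 2) ^ p ≤ ((1 + t) / Real.sqrt 2) ^ p :=
            Real.rpow_le_rpow_of_nonpos (by positivity) hd hp
        _ = Real.sqrt 2 ^ (-p) * (1 + t) ^ p := by
            rw [Real.div_rpow h1t.le (Real.sqrt_nonneg _), Real.rpow_neg (Real.sqrt_nonneg _)]
            ring
        _ ≤ _ := mul_le_mul_of_nonneg_right (le_max_right _ _) (Real.rpow_nonneg h1t.le _)
  have htq : t ^ (-q) ≤ 3 ^ q * (1 + t) ^ (-q) := by
    have h3 : (1 + t) / 3 ≤ t := by linarith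
    calc t ^ (-q) ≤ ((1 + t) / 3) ^ (-q) :=
          Real.rpow_le_rpow_of_nonpos (by positivity) h3 (by linarith)
      _ = 3 ^ q * (1 + t) ^ (-q) := by
          rw [Real.div_rpow h1t.le (by norm_num), Real.rpow_neg h1t.le,
            Real.rpow_neg (by norm_num : (0:ℝ) ≤ 3)]
          field_simp
  rw [div_eq_mul_inv, ← Real.rpow_neg ht0.le]
  calc Real.sqrt (1 + t ^ 2) ^ p * t ^ (-q)
      ≤ (max 1 (Real.sqrt 2 ^ (-p)) * (1 + t) ^ p) * (3 ^ q * (1 + t) ^ (-q)) := by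
        apply mul_le_mul hgp htq (Real.rpow_nonneg ht0.le _) (by positivity)
    _ = (max 1 (Real.sqrt 2 ^ (-p)) * 3 ^ q) * ((1 + t) ^ p * (1 + t) ^ (-q)) := by ring
    _ = (max 1 (Real.sqrt 2 ^ (-p)) * 3 ^ q) * (1 + t) ^ (p - q) := by
        rw [← Real.rpow_add h1t]; ring_nf

lemma I3 {A B : ℝ} (hA : 0 < A) (hB : 0 < B) (hsum : (n : ℝ) < A + B) :
    ∃ J : ℝ≥0∞, J ≠ ⊤ ∧ ∀ v : Esp n,
      (∫⁻ u : Esp n, ENNReal.ofReal ((1 + ‖u - v‖) ^ (-A))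
        * ENNReal.ofReal ((1 + ‖u‖) ^ (-B))) ≤ J := by
  set s : ℝ := A + B with hs
  set F : ℝ≥0∞ := ∫⁻ u : Esp n, ENNReal.ofReal ((1 + ‖u‖) ^ (-s)) with hF
  have hFfin : F < ⊤ :=
    finite_integral_one_add_norm (by rw [finrank_euclideanSpace_fin]; exact hsum)
  set p : ℝ := s / A with hp
  set q : ℝ := s / B with hq
  have hs0 : 0 < s := by positivity
  have hpq : p.HolderConjugate q := by
    rw [Real.holderConjugate_iff]
    constructor
    · rw [hp, lt_div_iff₀ hA, one_mul, hs]; linarith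
    · rw [hp, hq]
      field_simp
      exact hs.symm
  have hp0 : 0 < p := by rw [hp]; positivity
  have hq0 : 0 < q := by rw [hq]; positivity
  refine ⟨F ^ (1/p) * F ^ (1/q), ENNReal.mul_ne_top
    (ENNReal.rpow_ne_top_of_nonneg (by positivity) hFfin.ne)
    (ENNReal.rpow_ne_top_of_nonneg (by positivity) hFfin.ne), fun v => ?_⟩
  have hf : AEMeasurable (fun u : Esp n => ENNReal.ofReal ((1 + ‖u - v‖) ^ (-A))) volume := by
    fun_prop
  have hg : AEMeasurable (fun u : Esp n => ENNReal.ofReal ((1 + ‖u‖) ^ (-B))) volume := by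
    fun_prop
  have hold := ENNReal.lintegral_mul_le_Lp_mul_Lq (volume : Measure (Esp n)) hpq hf hg
  have e1 : (∫⁻ u : Esp n, (fun u : Esp n => ENNReal.ofReal ((1 + ‖u - v‖) ^ (-A))) u ^ p) = F := by
    have hAp : -A * p = -s := by rw [hp]; field_simp
    calc (∫⁻ u : Esp n, ENNReal.ofReal ((1 + ‖u - v‖) ^ (-A)) ^ p)
        = ∫⁻ u : Esp n, ENNReal.ofReal ((1 + ‖u - v‖) ^ (-s)) := by
          congr 1; ext u
          rw [ENNReal.ofReal_rpow_of_nonneg (by positivity) hp0.le,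
            ← Real.rpow_mul (by positivity), hAp]
      _ = F := by
          rw [hF]
          have := lintegral_add_right_eq_self (μ := (volume : Measure (Esp n)))
            (fun u : Esp n => ENNReal.ofReal ((1 + ‖u‖) ^ (-s))) (-v)
          simp only [← sub_eq_add_neg] at this
          exact this
  have e2 : (∫⁻ u : Esp n, (fun u : Esp n => ENNReal.ofReal ((1 + ‖u‖) ^ (-B))) u ^ q) = F := by
    have hBq : -B * q = -s := by rw [hq]; field_simp
    calc (∫⁻ u : Esp n, ENNReal.ofReal ((1 + ‖u‖) ^ (-B)) ^ q)
        = ∫⁻ u : Esp n, ENNReal.ofReal ((1 + ‖u‖) ^ (-s)) := by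
          congr 1; ext u
          rw [ENNReal.ofReal_rpow_of_nonneg (by positivity) hq0.le,
            ← Real.rpow_mul (by positivity), hBq]
      _ = F := rfl
  calc (∫⁻ u : Esp n, ENNReal.ofReal ((1 + ‖u - v‖) ^ (-A)) * ENNReal.ofReal ((1 + ‖u‖) ^ (-B)))
      ≤ (∫⁻ u : Esp n, (fun u : Esp n => ENNReal.ofReal ((1 + ‖u - v‖) ^ (-A))) u ^ p) ^ (1/p)
        * (∫⁻ u : Esp n, (fun u : Esp n => ENNReal.ofReal ((1 + ‖u‖) ^ (-B))) u ^ q) ^ (1/q) :=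
        hold
    _ = F ^ (1/p) * F ^ (1/q) := by rw [e1, e2]

lemma g_rpow_bracket {t : ℝ} (h0 : 0 ≤ t) (p : ℝ) :
    Real.sqrt (1 + t ^ 2) ^ p ≤ max 1 (Real.sqrt 2 ^ (-p)) * (1 + t) ^ p := by
  have h1t : (0:ℝ) < 1 + t := by linarith
  rcases le_total 0 p with hp | hp
  · calc Real.sqrt (1 + t ^ 2) ^ p ≤ (1 + t) ^ p :=
        Real.rpow_le_rpow (Real.sqrt_nonneg _) (g_le_one_add h0) hp
      _ ≤ _ := le_mul_of_one_le_left (Real.rpow_nonneg h1t.le _) (le_max_left _ _)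
  · have hd : (1 + t) / Real.sqrt 2 ≤ Real.sqrt (1 + t ^ 2) := by
      rw [div_le_iff₀ (by positivity)]
      calc 1 + t ≤ Real.sqrt 2 * Real.sqrt (1 + t ^ 2) := one_add_le_sqrt2_g t h0
        _ = Real.sqrt (1 + t ^ 2) * Real.sqrt 2 := mul_comm _ _
    calc Real.sqrt (1 + t ^ 2) ^ p ≤ ((1 + t) / Real.sqrt 2) ^ p :=
          Real.rpow_le_rpow_of_nonpos (by positivity) hd hp
      _ = Real.sqrt 2 ^ (-p) * (1 + t) ^ p := by
          rw [Real.div_rpow h1t.le (Real.sqrt_nonneg _), Real.rpow_neg (Real.sqrt_nonneg _)]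
          ring
      _ ≤ _ := mul_le_mul_of_nonneg_right (le_max_right _ _) (Real.rpow_nonneg h1t.le _)

lemma Ssup (hn : 1 ≤ n) (hn2 : 2 ≤ (n:ℝ)) {δ s : ℝ} (hδ : 0 < δ) (hs : 0 < s)
    (hsn : s < (n:ℝ)) :
    ∃ M : ℝ≥0∞, M ≠ ⊤ ∧ ∀ v : Esp n,
      (∫⁻ u : Esp n, ENNReal.ofReal
        ((Real.sqrt (1 + ‖u - v‖ ^ 2) ^ (((n:ℝ)+1)/2 - s) / ‖u - v‖ ^ ((n:ℝ) - s))
          * Real.sqrt (1 + ‖u‖ ^ 2) ^ (-(((n:ℝ)+1)/2) - δ))) ≤ M := by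
  set α : ℝ := ((n:ℝ)+1)/2 with hα
  set A : ℝ := ((n:ℝ)-1)/2 with hA
  set B : ℝ := α + δ with hB
  have hα0 : 0 < α := by rw [hα]; positivity
  have hA0 : 0 < A := by rw [hA]; linarith
  have hB0 : 0 < B := by rw [hB, hα]; positivity
  have hsum : (n:ℝ) < A + B := by rw [hA, hB, hα]; linarith
  obtain ⟨Bc, hBc, hBcall⟩ := I1 hn hs hsn
  obtain ⟨J, hJ, hJall⟩ := I3 hA0 hB0 hsum
  set c1 : ℝ := max 1 (Real.sqrt 5 ^ (α - s)) with hc1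
  set c3 : ℝ := max 1 (Real.sqrt 2 ^ (-(α - s))) * 3 ^ ((n:ℝ) - s) with hc3
  set cw : ℝ := max 1 (Real.sqrt 2 ^ (α + δ)) with hcw
  have hc10 : 0 ≤ c1 := le_trans zero_le_one (le_max_left _ _)
  have hc30 : 0 ≤ c3 := by rw [hc3]; positivity
  have hcw0 : 0 ≤ cw := le_trans zero_le_one (le_max_left _ _)
  refine ⟨ENNReal.ofReal c1 * Bc + ENNReal.ofReal (c3 * cw) * J,
    ENNReal.add_ne_top.mpr ⟨ENNReal.mul_ne_top ENNReal.ofReal_ne_top hBc,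
      ENNReal.mul_ne_top ENNReal.ofReal_ne_top hJ⟩, fun v => ?_⟩
  rw [← lintegral_add_compl (μ := (volume : Measure (Esp n))) _
    (measurableSet_ball (x := v) (ε := 1))]
  have hball : (∫⁻ u : Esp n in ball v 1, ENNReal.ofReal
      ((Real.sqrt (1 + ‖u - v‖ ^ 2) ^ (α - s) / ‖u - v‖ ^ ((n:ℝ) - s))
        * Real.sqrt (1 + ‖u‖ ^ 2) ^ (-α - δ))) ≤ ENNReal.ofReal c1 * Bc := by
    have hpt : ∀ u ∈ ball v 1, ENNReal.ofReal
        ((Real.sqrt (1 + ‖u - v‖ ^ 2) ^ (α - s) / ‖u - v‖ ^ ((n:ℝ) - s))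
          * Real.sqrt (1 + ‖u‖ ^ 2) ^ (-α - δ))
        ≤ ENNReal.ofReal c1 * ENNReal.ofReal (‖u - v‖ ^ (s - (n:ℝ))) := by
      intro u hu
      rw [← ENNReal.ofReal_mul hc10]
      apply ENNReal.ofReal_le_ofReal
      have ht1 : ‖u - v‖ < 1 := by rwa [mem_ball_iff_norm] at hu
      have hw1 : Real.sqrt (1 + ‖u‖ ^ 2) ^ (-α - δ) ≤ 1 :=
        Real.rpow_le_one_of_one_le_of_nonpos (g_one_le _) (by linarith)
      calc (Real.sqrt (1 + ‖u - v‖ ^ 2) ^ (α - s) / ‖u - v‖ ^ ((n:ℝ) - s))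
            * Real.sqrt (1 + ‖u‖ ^ 2) ^ (-α - δ)
          ≤ (Real.sqrt (1 + ‖u - v‖ ^ 2) ^ (α - s) / ‖u - v‖ ^ ((n:ℝ) - s)) * 1 := by
            apply mul_le_mul_of_nonneg_left hw1 (by positivity)
        _ = Real.sqrt (1 + ‖u - v‖ ^ 2) ^ (α - s) / ‖u - v‖ ^ ((n:ℝ) - s) := mul_one _
        _ ≤ c1 * ‖u - v‖ ^ (-((n:ℝ) - s)) :=
            KB1 (norm_nonneg _) (by linarith) (by linarith) (α - s)
        _ = c1 * ‖u - v‖ ^ (s - (n:ℝ)) := by ring_nf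
    calc (∫⁻ u : Esp n in ball v 1, ENNReal.ofReal
        ((Real.sqrt (1 + ‖u - v‖ ^ 2) ^ (α - s) / ‖u - v‖ ^ ((n:ℝ) - s))
          * Real.sqrt (1 + ‖u‖ ^ 2) ^ (-α - δ)))
        ≤ ∫⁻ u : Esp n in ball v 1,
            ENNReal.ofReal c1 * ENNReal.ofReal (‖u - v‖ ^ (s - (n:ℝ))) :=
          setLIntegral_mono' measurableSet_ball hpt
      _ = ENNReal.ofReal c1 * ∫⁻ u : Esp n in ball v 1,
            ENNReal.ofReal (‖u - v‖ ^ (s - (n:ℝ))) :=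
          lintegral_const_mul _ (by fun_prop)
      _ = ENNReal.ofReal c1 * (ENNReal.ofReal ((1:ℝ) ^ s) * Bc) := by
          rw [hBcall v 1 one_pos]
      _ = ENNReal.ofReal c1 * Bc := by
          rw [Real.one_rpow, ENNReal.ofReal_one, one_mul]
  have hcompl : (∫⁻ u : Esp n in (ball v 1)ᶜ, ENNReal.ofReal
      ((Real.sqrt (1 + ‖u - v‖ ^ 2) ^ (α - s) / ‖u - v‖ ^ ((n:ℝ) - s))
        * Real.sqrt (1 + ‖u‖ ^ 2) ^ (-α - δ))) ≤ ENNReal.ofReal (c3 * cw) * J := by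
    have hpt : ∀ u ∈ (ball v 1)ᶜ, ENNReal.ofReal
        ((Real.sqrt (1 + ‖u - v‖ ^ 2) ^ (α - s) / ‖u - v‖ ^ ((n:ℝ) - s))
          * Real.sqrt (1 + ‖u‖ ^ 2) ^ (-α - δ))
        ≤ ENNReal.ofReal (c3 * cw) *
          (ENNReal.ofReal ((1 + ‖u - v‖) ^ (-A)) * ENNReal.ofReal ((1 + ‖u‖) ^ (-B))) := by
      intro u hu
      have ht1 : (1:ℝ) ≤ ‖u - v‖ := by
        by_contra hc
        exact hu (mem_ball_iff_norm.mpr (by linarith))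
      rw [← ENNReal.ofReal_mul (by positivity), ← ENNReal.ofReal_mul (by positivity)]
      apply ENNReal.ofReal_le_ofReal
      have h1 : Real.sqrt (1 + ‖u - v‖ ^ 2) ^ (α - s) / ‖u - v‖ ^ ((n:ℝ) - s)
          ≤ c3 * (1 + ‖u - v‖) ^ (-A) := by
        have := KB3 (t := ‖u - v‖) (by linarith) (q := (n:ℝ) - s) (by linarith) (α - s)
        rw [hc3]
        convert this using 3
        rw [hα, hA]; ring
      have h2 : Real.sqrt (1 + ‖u‖ ^ 2) ^ (-α - δ) ≤ cw * (1 + ‖u‖) ^ (-B) := by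
        have := g_rpow_bracket (norm_nonneg u) (-α - δ)
        rw [hcw, hB]
        convert this using 3 <;> ring
      calc (Real.sqrt (1 + ‖u - v‖ ^ 2) ^ (α - s) / ‖u - v‖ ^ ((n:ℝ) - s))
            * Real.sqrt (1 + ‖u‖ ^ 2) ^ (-α - δ)
          ≤ (c3 * (1 + ‖u - v‖) ^ (-A)) * (cw * (1 + ‖u‖) ^ (-B)) :=
            mul_le_mul h1 h2 (by positivity) (by positivity)
        _ = c3 * cw * ((1 + ‖u - v‖) ^ (-A) * (1 + ‖u‖) ^ (-B)) := by ring
    calc (∫⁻ u : Esp n in (ball v 1)ᶜ, ENNReal.ofReal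
        ((Real.sqrt (1 + ‖u - v‖ ^ 2) ^ (α - s) / ‖u - v‖ ^ ((n:ℝ) - s))
          * Real.sqrt (1 + ‖u‖ ^ 2) ^ (-α - δ)))
        ≤ ∫⁻ u : Esp n in (ball v 1)ᶜ, ENNReal.ofReal (c3 * cw) *
            (ENNReal.ofReal ((1 + ‖u - v‖) ^ (-A)) * ENNReal.ofReal ((1 + ‖u‖) ^ (-B))) :=
          setLIntegral_mono' measurableSet_ball.compl hpt
      _ ≤ ∫⁻ u : Esp n, ENNReal.ofReal (c3 * cw) *
            (ENNReal.ofReal ((1 + ‖u - v‖) ^ (-A)) * ENNReal.ofReal ((1 + ‖u‖) ^ (-B))) :=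
          setLIntegral_le_lintegral _ _
      _ = ENNReal.ofReal (c3 * cw) * ∫⁻ u : Esp n,
            ENNReal.ofReal ((1 + ‖u - v‖) ^ (-A)) * ENNReal.ofReal ((1 + ‖u‖) ^ (-B)) :=
          lintegral_const_mul _ (by fun_prop)
      _ ≤ ENNReal.ofReal (c3 * cw) * J := by
          apply mul_le_mul_right (hJall v)
  calc (∫⁻ u : Esp n in ball v 1, ENNReal.ofReal
      ((Real.sqrt (1 + ‖u - v‖ ^ 2) ^ (α - s) / ‖u - v‖ ^ ((n:ℝ) - s))
        * Real.sqrt (1 + ‖u‖ ^ 2) ^ (-α - δ)))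
      + (∫⁻ u : Esp n in (ball v 1)ᶜ, ENNReal.ofReal
      ((Real.sqrt (1 + ‖u - v‖ ^ 2) ^ (α - s) / ‖u - v‖ ^ ((n:ℝ) - s))
        * Real.sqrt (1 + ‖u‖ ^ 2) ^ (-α - δ)))
      ≤ ENNReal.ofReal c1 * Bc + ENNReal.ofReal (c3 * cw) * J := add_le_add hball hcompl

lemma half_rpow {r : ℝ} (hr : 0 < r) (x : ℝ) : (r / 2) ^ x = r ^ x * 2 ^ (-x) := by
  rw [Real.div_rpow hr.le (by norm_num), Real.rpow_neg (by norm_num : (0:ℝ) ≤ 2)]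
  rfl

lemma cover_le {X : Type*} (f : X → ℝ≥0∞) (S1 S2 S3 S4 : Set X)
    (hcov : ∀ x, x ∈ S1 ∨ x ∈ S2 ∨ x ∈ S3 ∨ x ∈ S4) :
    f ≤ S1.indicator f + S2.indicator f + S3.indicator f + S4.indicator f := by
  intro x
  simp only [Pi.add_apply]
  rcases hcov x with h | h | h | h
  · exact le_trans (le_of_eq (Set.indicator_of_mem h f).symm)
      (le_trans (le_trans le_self_add le_self_add) le_self_add)
  · exact le_trans (le_of_eq (Set.indicator_of_mem h f).symm)
      (le_trans (le_trans le_add_self le_self_add) le_self_add)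
  · exact le_trans (le_of_eq (Set.indicator_of_mem h f).symm)
      (le_trans le_add_self le_self_add)
  · exact le_trans (le_of_eq (Set.indicator_of_mem h f).symm) le_add_self

set_option maxHeartbeats 2000000 in
lemma master (n m a : ℕ) (hn : 1 ≤ n) (hm : 1 ≤ m) (ha : 1 ≤ a)
    (hna : 2 * m * (a + 1) < n) (δ : ℝ) (hδ : 0 < δ) :
    ∃ c : ℝ, 0 ≤ c ∧ ∀ u₀ u₁ : EuclideanSpace ℝ (Fin n), u₀ ≠ u₁ →
      (∫⁻ u : Esp n, ENNReal.ofReal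
        ((Real.sqrt (1 + ‖u₀ - u‖ ^ 2) ^ (((n : ℝ) + 1) / 2 - 2 * (m:ℝ) * (a:ℝ)) /
            ‖u₀ - u‖ ^ ((n : ℝ) - 2 * (m:ℝ) * (a:ℝ))) *
          Real.sqrt (1 + ‖u‖ ^ 2) ^ (-(((n : ℝ) + 1) / 2) - δ) *
            (Real.sqrt (1 + ‖u - u₁‖ ^ 2) ^ (((n : ℝ) + 1) / 2 - 2 * (m:ℝ)) /
              ‖u - u₁‖ ^ ((n : ℝ) - 2 * (m:ℝ)))))
      ≤ ENNReal.ofReal (c *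
          (Real.sqrt (1 + ‖u₀ - u₁‖ ^ 2) ^ (((n : ℝ) + 1) / 2 - 2 * (m:ℝ) * ((a:ℝ) + 1))
            * ‖u₀ - u₁‖ ^ (-((n : ℝ) - 2 * (m:ℝ) * ((a:ℝ) + 1))))) := by
  have hmR : (1:ℝ) ≤ (m:ℝ) := by exact_mod_cast hm
  have haR : (1:ℝ) ≤ (a:ℝ) := by exact_mod_cast ha
  have hnaR : 2 * (m:ℝ) * ((a:ℝ) + 1) < (n:ℝ) := by exact_mod_cast hna
  have hn5 : (5:ℝ) ≤ (n:ℝ) := by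
    have h1 : 2 * 1 * (1 + 1) ≤ 2 * m * (a + 1) := by
      apply Nat.mul_le_mul
      · exact Nat.mul_le_mul le_rfl hm
      · omega
    exact_mod_cast (by omega : 5 ≤ n)
  have hs1 : 0 < 2 * (m:ℝ) * (a:ℝ) := by nlinarith
  have hs1n : 2 * (m:ℝ) * (a:ℝ) < (n:ℝ) := by nlinarith
  have hs3 : 0 < 2 * (m:ℝ) := by linarith
  have hs3n : 2 * (m:ℝ) < (n:ℝ) := by nlinarith
  have hq4 : 0 < (n:ℝ) - 2 * (m:ℝ) * ((a:ℝ) + 1) := by linarith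
  have hαn : ((n:ℝ) + 1) / 2 - (n:ℝ) ≤ 0 := by linarith
  have hα0 : 0 < ((n:ℝ) + 1) / 2 := by linarith
  obtain ⟨M1, hM1top, hM1⟩ := Ssup (n := n) hn (by linarith) hδ hs1 hs1n
  obtain ⟨M3, hM3top, hM3⟩ := Ssup (n := n) hn (by linarith) hδ hs3 hs3n
  obtain ⟨B1c, hB1top, hB1⟩ := I1 (n := n) hn hs1 hs1n
  obtain ⟨B3c, hB3top, hB3⟩ := I1 (n := n) hn hs3 hs3n
  obtain ⟨Cx, hCxtop, hCx⟩ :=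
    I2 (n := n) (τ := 2 * (n:ℝ) - 2 * (m:ℝ) * ((a:ℝ) + 1)) (by linarith)
  set rM1 : ℝ := M1.toReal with hrM1
  set rM3 : ℝ := M3.toReal with hrM3
  set rB1 : ℝ := B1c.toReal with hrB1
  set rB3 : ℝ := B3c.toReal with hrB3
  set rCx : ℝ := Cx.toReal with hrCx
  have hrM10 : 0 ≤ rM1 := ENNReal.toReal_nonneg
  have hrM30 : 0 ≤ rM3 := ENNReal.toReal_nonneg
  have hrB10 : 0 ≤ rB1 := ENNReal.toReal_nonneg
  have hrB30 : 0 ≤ rB3 := ENNReal.toReal_nonneg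
  have hrCx0 : 0 ≤ rCx := ENNReal.toReal_nonneg
  have hM1' : M1 = ENNReal.ofReal rM1 := (ENNReal.ofReal_toReal hM1top).symm
  have hM3' : M3 = ENNReal.ofReal rM3 := (ENNReal.ofReal_toReal hM3top).symm
  have hB1' : B1c = ENNReal.ofReal rB1 := (ENNReal.ofReal_toReal hB1top).symm
  have hB3' : B3c = ENNReal.ofReal rB3 := (ENNReal.ofReal_toReal hB3top).symm
  have hCx' : Cx = ENNReal.ofReal rCx := (ENNReal.ofReal_toReal hCxtop).symm
  set cmp1 : ℝ := max 1 (Real.sqrt 5 ^ (((n:ℝ) + 1) / 2 - 2 * (m:ℝ) * (a:ℝ))) with hcmp1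
  set cmp3 : ℝ := max 1 (Real.sqrt 5 ^ (((n:ℝ) + 1) / 2 - 2 * (m:ℝ))) with hcmp3
  set ck : ℝ := max 1 (Real.sqrt 2 ^ (-(((n:ℝ) + 1) / 2 - 2 * (m:ℝ) * (a:ℝ))))
    * 3 ^ ((n:ℝ) - 2 * (m:ℝ) * (a:ℝ)) with hck
  set ce : ℝ := max 1 (Real.sqrt 2
    ^ (-(((n:ℝ) + 1) / 2 - 2 * (m:ℝ) * ((a:ℝ) + 1)))) with hce
  have hcmp10 : 0 ≤ cmp1 := le_trans zero_le_one (le_max_left _ _)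
  have hcmp30 : 0 ≤ cmp3 := le_trans zero_le_one (le_max_left _ _)
  have hck0 : 0 ≤ ck := by rw [hck]; positivity
  have hce0 : 0 ≤ ce := le_trans zero_le_one (le_max_left _ _)
  set cC1 : ℝ := (cmp3 * rM1 + cmp1 * rM3) * 2 ^ ((n:ℝ) - ((n:ℝ) + 1) / 2) * ce with hcC1
  set cR1 : ℝ := cmp1 * cmp3 * rB1 * 2 ^ ((n:ℝ) - 2 * (m:ℝ) * ((a:ℝ) + 1)) with hcR1
  set cR2 : ℝ := cmp1 * cmp3 * rB3 * 2 ^ ((n:ℝ) - 2 * (m:ℝ) * ((a:ℝ) + 1)) with hcR2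
  set cR3 : ℝ := cmp1 * cmp3 * (2 * rCx) * 2 ^ ((n:ℝ) - 2 * (m:ℝ) * ((a:ℝ) + 1)) with hcR3
  set cR4 : ℝ := ck * rM3 with hcR4
  have hcC10 : 0 ≤ cC1 := by rw [hcC1]; positivity
  have hcR10 : 0 ≤ cR1 := by rw [hcR1]; positivity
  have hcR20 : 0 ≤ cR2 := by rw [hcR2]; positivity
  have hcR30 : 0 ≤ cR3 := by rw [hcR3]; positivity
  have hcR40 : 0 ≤ cR4 := by rw [hcR4]; positivity
  refine ⟨cC1 + (cR1 + cR2 + cR3 + cR4) * ce, by positivity, fun u₀ u₁ hne => ?_⟩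

  have hr0 : 0 < ‖u₀ - u₁‖ := by rw [norm_pos_iff, sub_ne_zero]; exact hne
  have hwle : ∀ u : Esp n, Real.sqrt (1 + ‖u‖ ^ 2) ^ (-(((n:ℝ) + 1) / 2) - δ) ≤ 1 :=
    fun u => Real.rpow_le_one_of_one_le_of_nonpos (g_one_le _) (by linarith)
  have htri : ∀ u : Esp n, ‖u₀ - u₁‖ ≤ ‖u₀ - u‖ + ‖u - u₁‖ := fun u => by
    simpa [dist_eq_norm] using dist_triangle u₀ u u₁
  set f : Esp n → ℝ≥0∞ := fun u => ENNReal.ofReal ((Real.sqrt (1 + ‖u₀ - u‖ ^ 2) ^ (((n:ℝ) + 1) / 2 - 2 * (m:ℝ) * (a:ℝ)) / ‖u₀ - u‖ ^ ((n:ℝ) - 2 * (m:ℝ) * (a:ℝ))) * Real.sqrt (1 + ‖u‖ ^ 2) ^ (-(((n:ℝ) + 1) / 2) - δ) * (Real.sqrt (1 + ‖u - u₁‖ ^ 2) ^ (((n:ℝ) + 1) / 2 - 2 * (m:ℝ)) / ‖u - u₁‖ ^ ((n:ℝ) - 2 * (m:ℝ)))) with hfdef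
  have hfm : Measurable f := by rw [hfdef]; fun_prop
  have hGnn : (0:ℝ) ≤ Real.sqrt (1 + ‖u₀ - u₁‖ ^ 2) ^ (((n:ℝ) + 1) / 2 - 2 * (m:ℝ) * ((a:ℝ) + 1)) * ‖u₀ - u₁‖ ^ (-((n:ℝ) - 2 * (m:ℝ) * ((a:ℝ) + 1))) := by positivity
  rcases le_or_gt 1 ‖u₀ - u₁‖ with hr1 | hr1
  · -- case r ≥ 1
    have hρ0 : 0 < ‖u₀ - u₁‖ / 2 := by linarith
    have hhalf : (1:ℝ)/2 ≤ ‖u₀ - u₁‖ / 2 := by linarith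
    have hball : (∫⁻ u : Esp n in ball u₀ (‖u₀ - u₁‖ / 2), f u)
        ≤ ENNReal.ofReal (cmp3 * (‖u₀ - u₁‖ / 2) ^ (((n:ℝ) + 1) / 2 - (n:ℝ)) * rM1) := by
      have hpt : ∀ u ∈ ball u₀ (‖u₀ - u₁‖ / 2), f u ≤
          ENNReal.ofReal (cmp3 * (‖u₀ - u₁‖ / 2) ^ (((n:ℝ) + 1) / 2 - (n:ℝ))) * ENNReal.ofReal ((Real.sqrt (1 + ‖u - u₀‖ ^ 2) ^ (((n:ℝ) + 1) / 2 - 2 * (m:ℝ) * (a:ℝ)) / ‖u - u₀‖ ^ ((n:ℝ) - 2 * (m:ℝ) * (a:ℝ))) * Real.sqrt (1 + ‖u‖ ^ 2) ^ (-(((n:ℝ) + 1) / 2) - δ)) := by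
        intro u hu
        rw [← ENNReal.ofReal_mul (by positivity)]
        apply ENNReal.ofReal_le_ofReal
        have h1 : ‖u - u₀‖ < ‖u₀ - u₁‖ / 2 := mem_ball_iff_norm.mp hu
        have ht3 : ‖u₀ - u₁‖ / 2 ≤ ‖u - u₁‖ := by
          have h2 := htri u
          rw [norm_sub_rev u₀ u] at h2
          linarith
        have hK3 : Real.sqrt (1 + ‖u - u₁‖ ^ 2) ^ (((n:ℝ) + 1) / 2 - 2 * (m:ℝ)) / ‖u - u₁‖ ^ ((n:ℝ) - 2 * (m:ℝ)) ≤ cmp3 * (‖u₀ - u₁‖ / 2) ^ (((n:ℝ) + 1) / 2 - (n:ℝ)) := by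
          have h := KB2 (t := ‖u - u₁‖) (by linarith) ht3 hρ0
            (p := ((n:ℝ) + 1) / 2 - 2 * (m:ℝ)) (q := (n:ℝ) - 2 * (m:ℝ)) (by linarith)
          rw [show (((n:ℝ) + 1) / 2 - 2 * (m:ℝ)) - ((n:ℝ) - 2 * (m:ℝ)) = ((n:ℝ) + 1) / 2 - (n:ℝ) by ring] at h
          rw [hcmp3]
          exact h
        rw [norm_sub_rev u u₀]
        calc (Real.sqrt (1 + ‖u₀ - u‖ ^ 2) ^ (((n:ℝ) + 1) / 2 - 2 * (m:ℝ) * (a:ℝ)) / ‖u₀ - u‖ ^ ((n:ℝ) - 2 * (m:ℝ) * (a:ℝ))) * Real.sqrt (1 + ‖u‖ ^ 2) ^ (-(((n:ℝ) + 1) / 2) - δ) * (Real.sqrt (1 + ‖u - u₁‖ ^ 2) ^ (((n:ℝ) + 1) / 2 - 2 * (m:ℝ)) / ‖u - u₁‖ ^ ((n:ℝ) - 2 * (m:ℝ)))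
            ≤ ((Real.sqrt (1 + ‖u₀ - u‖ ^ 2) ^ (((n:ℝ) + 1) / 2 - 2 * (m:ℝ) * (a:ℝ)) / ‖u₀ - u‖ ^ ((n:ℝ) - 2 * (m:ℝ) * (a:ℝ))) * Real.sqrt (1 + ‖u‖ ^ 2) ^ (-(((n:ℝ) + 1) / 2) - δ)) * (cmp3 * (‖u₀ - u₁‖ / 2) ^ (((n:ℝ) + 1) / 2 - (n:ℝ))) := by
              apply mul_le_mul_of_nonneg_left hK3 (by positivity)
          _ = cmp3 * (‖u₀ - u₁‖ / 2) ^ (((n:ℝ) + 1) / 2 - (n:ℝ)) * ((Real.sqrt (1 + ‖u₀ - u‖ ^ 2) ^ (((n:ℝ) + 1) / 2 - 2 * (m:ℝ) * (a:ℝ)) / ‖u₀ - u‖ ^ ((n:ℝ) - 2 * (m:ℝ) * (a:ℝ))) * Real.sqrt (1 + ‖u‖ ^ 2) ^ (-(((n:ℝ) + 1) / 2) - δ)) := by ring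
      calc (∫⁻ u : Esp n in ball u₀ (‖u₀ - u₁‖ / 2), f u)
          ≤ ∫⁻ u : Esp n in ball u₀ (‖u₀ - u₁‖ / 2),
              ENNReal.ofReal (cmp3 * (‖u₀ - u₁‖ / 2) ^ (((n:ℝ) + 1) / 2 - (n:ℝ))) * ENNReal.ofReal ((Real.sqrt (1 + ‖u - u₀‖ ^ 2) ^ (((n:ℝ) + 1) / 2 - 2 * (m:ℝ) * (a:ℝ)) / ‖u - u₀‖ ^ ((n:ℝ) - 2 * (m:ℝ) * (a:ℝ))) * Real.sqrt (1 + ‖u‖ ^ 2) ^ (-(((n:ℝ) + 1) / 2) - δ)) :=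
            setLIntegral_mono' measurableSet_ball hpt
        _ ≤ ∫⁻ u : Esp n,
              ENNReal.ofReal (cmp3 * (‖u₀ - u₁‖ / 2) ^ (((n:ℝ) + 1) / 2 - (n:ℝ))) * ENNReal.ofReal ((Real.sqrt (1 + ‖u - u₀‖ ^ 2) ^ (((n:ℝ) + 1) / 2 - 2 * (m:ℝ) * (a:ℝ)) / ‖u - u₀‖ ^ ((n:ℝ) - 2 * (m:ℝ) * (a:ℝ))) * Real.sqrt (1 + ‖u‖ ^ 2) ^ (-(((n:ℝ) + 1) / 2) - δ)) :=
            setLIntegral_le_lintegral _ _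
        _ = ENNReal.ofReal (cmp3 * (‖u₀ - u₁‖ / 2) ^ (((n:ℝ) + 1) / 2 - (n:ℝ))) *
              ∫⁻ u : Esp n, ENNReal.ofReal ((Real.sqrt (1 + ‖u - u₀‖ ^ 2) ^ (((n:ℝ) + 1) / 2 - 2 * (m:ℝ) * (a:ℝ)) / ‖u - u₀‖ ^ ((n:ℝ) - 2 * (m:ℝ) * (a:ℝ))) * Real.sqrt (1 + ‖u‖ ^ 2) ^ (-(((n:ℝ) + 1) / 2) - δ)) :=
            lintegral_const_mul _ (by fun_prop)
        _ ≤ ENNReal.ofReal (cmp3 * (‖u₀ - u₁‖ / 2) ^ (((n:ℝ) + 1) / 2 - (n:ℝ))) * ENNReal.ofReal rM1 := by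
            apply mul_le_mul_right
            exact (hM1 u₀).trans_eq (by rw [hM1'])
        _ = ENNReal.ofReal (cmp3 * (‖u₀ - u₁‖ / 2) ^ (((n:ℝ) + 1) / 2 - (n:ℝ)) * rM1) := by
            rw [← ENNReal.ofReal_mul (by positivity)]
    have hcompl : (∫⁻ u : Esp n in (ball u₀ (‖u₀ - u₁‖ / 2))ᶜ, f u)
        ≤ ENNReal.ofReal (cmp1 * (‖u₀ - u₁‖ / 2) ^ (((n:ℝ) + 1) / 2 - (n:ℝ)) * rM3) := by
      have hpt : ∀ u ∈ (ball u₀ (‖u₀ - u₁‖ / 2))ᶜ, f u ≤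
          ENNReal.ofReal (cmp1 * (‖u₀ - u₁‖ / 2) ^ (((n:ℝ) + 1) / 2 - (n:ℝ))) * ENNReal.ofReal ((Real.sqrt (1 + ‖u - u₁‖ ^ 2) ^ (((n:ℝ) + 1) / 2 - 2 * (m:ℝ)) / ‖u - u₁‖ ^ ((n:ℝ) - 2 * (m:ℝ))) * Real.sqrt (1 + ‖u‖ ^ 2) ^ (-(((n:ℝ) + 1) / 2) - δ)) := by
        intro u hu
        rw [← ENNReal.ofReal_mul (by positivity)]
        apply ENNReal.ofReal_le_ofReal
        have h1 : ‖u₀ - u₁‖ / 2 ≤ ‖u - u₀‖ := by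
          by_contra hcon
          exact hu (mem_ball_iff_norm.mpr (by linarith))
        rw [norm_sub_rev u u₀] at h1
        have hK1 : Real.sqrt (1 + ‖u₀ - u‖ ^ 2) ^ (((n:ℝ) + 1) / 2 - 2 * (m:ℝ) * (a:ℝ)) / ‖u₀ - u‖ ^ ((n:ℝ) - 2 * (m:ℝ) * (a:ℝ)) ≤ cmp1 * (‖u₀ - u₁‖ / 2) ^ (((n:ℝ) + 1) / 2 - (n:ℝ)) := by
          have h := KB2 (t := ‖u₀ - u‖) (by linarith) h1 hρ0
            (p := ((n:ℝ) + 1) / 2 - 2 * (m:ℝ) * (a:ℝ)) (q := (n:ℝ) - 2 * (m:ℝ) * (a:ℝ)) (by linarith)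
          rw [show (((n:ℝ) + 1) / 2 - 2 * (m:ℝ) * (a:ℝ)) - ((n:ℝ) - 2 * (m:ℝ) * (a:ℝ)) = ((n:ℝ) + 1) / 2 - (n:ℝ) by ring] at h
          rw [hcmp1]
          exact h
        calc (Real.sqrt (1 + ‖u₀ - u‖ ^ 2) ^ (((n:ℝ) + 1) / 2 - 2 * (m:ℝ) * (a:ℝ)) / ‖u₀ - u‖ ^ ((n:ℝ) - 2 * (m:ℝ) * (a:ℝ))) * Real.sqrt (1 + ‖u‖ ^ 2) ^ (-(((n:ℝ) + 1) / 2) - δ) * (Real.sqrt (1 + ‖u - u₁‖ ^ 2) ^ (((n:ℝ) + 1) / 2 - 2 * (m:ℝ)) / ‖u - u₁‖ ^ ((n:ℝ) - 2 * (m:ℝ)))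
            ≤ (cmp1 * (‖u₀ - u₁‖ / 2) ^ (((n:ℝ) + 1) / 2 - (n:ℝ))) * Real.sqrt (1 + ‖u‖ ^ 2) ^ (-(((n:ℝ) + 1) / 2) - δ) * (Real.sqrt (1 + ‖u - u₁‖ ^ 2) ^ (((n:ℝ) + 1) / 2 - 2 * (m:ℝ)) / ‖u - u₁‖ ^ ((n:ℝ) - 2 * (m:ℝ))) := by
              apply mul_le_mul_of_nonneg_right (mul_le_mul_of_nonneg_right hK1 (by positivity))
                (by positivity)
          _ = cmp1 * (‖u₀ - u₁‖ / 2) ^ (((n:ℝ) + 1) / 2 - (n:ℝ)) * ((Real.sqrt (1 + ‖u - u₁‖ ^ 2) ^ (((n:ℝ) + 1) / 2 - 2 * (m:ℝ)) / ‖u - u₁‖ ^ ((n:ℝ) - 2 * (m:ℝ))) * Real.sqrt (1 + ‖u‖ ^ 2) ^ (-(((n:ℝ) + 1) / 2) - δ)) := by ring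
      calc (∫⁻ u : Esp n in (ball u₀ (‖u₀ - u₁‖ / 2))ᶜ, f u)
          ≤ ∫⁻ u : Esp n in (ball u₀ (‖u₀ - u₁‖ / 2))ᶜ,
              ENNReal.ofReal (cmp1 * (‖u₀ - u₁‖ / 2) ^ (((n:ℝ) + 1) / 2 - (n:ℝ))) * ENNReal.ofReal ((Real.sqrt (1 + ‖u - u₁‖ ^ 2) ^ (((n:ℝ) + 1) / 2 - 2 * (m:ℝ)) / ‖u - u₁‖ ^ ((n:ℝ) - 2 * (m:ℝ))) * Real.sqrt (1 + ‖u‖ ^ 2) ^ (-(((n:ℝ) + 1) / 2) - δ)) :=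
            setLIntegral_mono' measurableSet_ball.compl hpt
        _ ≤ ∫⁻ u : Esp n,
              ENNReal.ofReal (cmp1 * (‖u₀ - u₁‖ / 2) ^ (((n:ℝ) + 1) / 2 - (n:ℝ))) * ENNReal.ofReal ((Real.sqrt (1 + ‖u - u₁‖ ^ 2) ^ (((n:ℝ) + 1) / 2 - 2 * (m:ℝ)) / ‖u - u₁‖ ^ ((n:ℝ) - 2 * (m:ℝ))) * Real.sqrt (1 + ‖u‖ ^ 2) ^ (-(((n:ℝ) + 1) / 2) - δ)) :=
            setLIntegral_le_lintegral _ _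
        _ = ENNReal.ofReal (cmp1 * (‖u₀ - u₁‖ / 2) ^ (((n:ℝ) + 1) / 2 - (n:ℝ))) *
              ∫⁻ u : Esp n, ENNReal.ofReal ((Real.sqrt (1 + ‖u - u₁‖ ^ 2) ^ (((n:ℝ) + 1) / 2 - 2 * (m:ℝ)) / ‖u - u₁‖ ^ ((n:ℝ) - 2 * (m:ℝ))) * Real.sqrt (1 + ‖u‖ ^ 2) ^ (-(((n:ℝ) + 1) / 2) - δ)) :=
            lintegral_const_mul _ (by fun_prop)
        _ ≤ ENNReal.ofReal (cmp1 * (‖u₀ - u₁‖ / 2) ^ (((n:ℝ) + 1) / 2 - (n:ℝ))) * ENNReal.ofReal rM3 := by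
            apply mul_le_mul_right
            exact (hM3 u₁).trans_eq (by rw [hM3'])
        _ = ENNReal.ofReal (cmp1 * (‖u₀ - u₁‖ / 2) ^ (((n:ℝ) + 1) / 2 - (n:ℝ)) * rM3) := by
            rw [← ENNReal.ofReal_mul (by positivity)]
    have hfin : cmp3 * (‖u₀ - u₁‖ / 2) ^ (((n:ℝ) + 1) / 2 - (n:ℝ)) * rM1 + cmp1 * (‖u₀ - u₁‖ / 2) ^ (((n:ℝ) + 1) / 2 - (n:ℝ)) * rM3
        ≤ (cC1 + (cR1 + cR2 + cR3 + cR4) * ce) * (Real.sqrt (1 + ‖u₀ - u₁‖ ^ 2) ^ (((n:ℝ) + 1) / 2 - 2 * (m:ℝ) * ((a:ℝ) + 1)) * ‖u₀ - u₁‖ ^ (-((n:ℝ) - 2 * (m:ℝ) * ((a:ℝ) + 1)))) := by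
      have hX : (‖u₀ - u₁‖ / 2) ^ (((n:ℝ) + 1) / 2 - (n:ℝ)) = ‖u₀ - u₁‖ ^ (((n:ℝ) + 1) / 2 - 2 * (m:ℝ) * ((a:ℝ) + 1)) * ‖u₀ - u₁‖ ^ (-((n:ℝ) - 2 * (m:ℝ) * ((a:ℝ) + 1)))
          * 2 ^ ((n:ℝ) - ((n:ℝ) + 1) / 2) := by
        rw [half_rpow hr0, show -(((n:ℝ) + 1) / 2 - (n:ℝ)) = (n:ℝ) - ((n:ℝ) + 1) / 2 by ring,
          show ((n:ℝ) + 1) / 2 - (n:ℝ) = (((n:ℝ) + 1) / 2 - 2 * (m:ℝ) * ((a:ℝ) + 1)) + -((n:ℝ) - 2 * (m:ℝ) * ((a:ℝ) + 1)) by ring, Real.rpow_add hr0]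
      have hre4 : ‖u₀ - u₁‖ ^ (((n:ℝ) + 1) / 2 - 2 * (m:ℝ) * ((a:ℝ) + 1)) ≤ ce * Real.sqrt (1 + ‖u₀ - u₁‖ ^ 2) ^ (((n:ℝ) + 1) / 2 - 2 * (m:ℝ) * ((a:ℝ) + 1)) := by
        rw [hce]
        exact t_rpow_le_g hr1 _
      calc cmp3 * (‖u₀ - u₁‖ / 2) ^ (((n:ℝ) + 1) / 2 - (n:ℝ)) * rM1 + cmp1 * (‖u₀ - u₁‖ / 2) ^ (((n:ℝ) + 1) / 2 - (n:ℝ)) * rM3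
          = ((cmp3 * rM1 + cmp1 * rM3) * 2 ^ ((n:ℝ) - ((n:ℝ) + 1) / 2))
            * (‖u₀ - u₁‖ ^ (((n:ℝ) + 1) / 2 - 2 * (m:ℝ) * ((a:ℝ) + 1)) * ‖u₀ - u₁‖ ^ (-((n:ℝ) - 2 * (m:ℝ) * ((a:ℝ) + 1)))) := by rw [hX]; ring
        _ ≤ ((cmp3 * rM1 + cmp1 * rM3) * 2 ^ ((n:ℝ) - ((n:ℝ) + 1) / 2))
            * ((ce * Real.sqrt (1 + ‖u₀ - u₁‖ ^ 2) ^ (((n:ℝ) + 1) / 2 - 2 * (m:ℝ) * ((a:ℝ) + 1))) * ‖u₀ - u₁‖ ^ (-((n:ℝ) - 2 * (m:ℝ) * ((a:ℝ) + 1)))) := by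
            apply mul_le_mul_of_nonneg_left
              (mul_le_mul_of_nonneg_right hre4 (Real.rpow_nonneg hr0.le _))
            have := mul_nonneg (mul_nonneg hcmp30 hrM10) (le_refl (0:ℝ))
            positivity
        _ = cC1 * (Real.sqrt (1 + ‖u₀ - u₁‖ ^ 2) ^ (((n:ℝ) + 1) / 2 - 2 * (m:ℝ) * ((a:ℝ) + 1)) * ‖u₀ - u₁‖ ^ (-((n:ℝ) - 2 * (m:ℝ) * ((a:ℝ) + 1)))) := by rw [hcC1]; ring
        _ ≤ (cC1 + (cR1 + cR2 + cR3 + cR4) * ce) * (Real.sqrt (1 + ‖u₀ - u₁‖ ^ 2) ^ (((n:ℝ) + 1) / 2 - 2 * (m:ℝ) * ((a:ℝ) + 1)) * ‖u₀ - u₁‖ ^ (-((n:ℝ) - 2 * (m:ℝ) * ((a:ℝ) + 1)))) := by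
            apply mul_le_mul_of_nonneg_right _ hGnn
            linarith [mul_nonneg (add_nonneg (add_nonneg (add_nonneg hcR10 hcR20) hcR30) hcR40) hce0]
      done
    calc (∫⁻ u : Esp n, f u)
        = (∫⁻ u : Esp n in ball u₀ (‖u₀ - u₁‖ / 2), f u)
          + (∫⁻ u : Esp n in (ball u₀ (‖u₀ - u₁‖ / 2))ᶜ, f u) :=
          (lintegral_add_compl f measurableSet_ball).symm
      _ ≤ ENNReal.ofReal (cmp3 * (‖u₀ - u₁‖ / 2) ^ (((n:ℝ) + 1) / 2 - (n:ℝ)) * rM1) + ENNReal.ofReal (cmp1 * (‖u₀ - u₁‖ / 2) ^ (((n:ℝ) + 1) / 2 - (n:ℝ)) * rM3) :=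
          add_le_add hball hcompl
      _ = ENNReal.ofReal (cmp3 * (‖u₀ - u₁‖ / 2) ^ (((n:ℝ) + 1) / 2 - (n:ℝ)) * rM1 + cmp1 * (‖u₀ - u₁‖ / 2) ^ (((n:ℝ) + 1) / 2 - (n:ℝ)) * rM3) :=
          (ENNReal.ofReal_add (by positivity) (by positivity)).symm
      _ ≤ ENNReal.ofReal ((cC1 + (cR1 + cR2 + cR3 + cR4) * ce) * (Real.sqrt (1 + ‖u₀ - u₁‖ ^ 2) ^ (((n:ℝ) + 1) / 2 - 2 * (m:ℝ) * ((a:ℝ) + 1)) * ‖u₀ - u₁‖ ^ (-((n:ℝ) - 2 * (m:ℝ) * ((a:ℝ) + 1))))) :=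
          ENNReal.ofReal_le_ofReal hfin
  · -- case r < 1
    have hρ0 : 0 < ‖u₀ - u₁‖ / 2 := by linarith
    set SB1 : Set (Esp n) := ball u₀ (‖u₀ - u₁‖ / 2) with hSB1
    set SB2 : Set (Esp n) := ball u₁ (‖u₀ - u₁‖ / 2) with hSB2
    set SD3 : Set (Esp n) := closedBall u₀ 1 \ (SB1 ∪ SB2) with hSD3
    set SD4 : Set (Esp n) := (ball u₀ 1)ᶜ with hSD4
    have hmSB1 : MeasurableSet SB1 := measurableSet_ball
    have hmSB2 : MeasurableSet SB2 := measurableSet_ball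
    have hmSD3 : MeasurableSet SD3 :=
      measurableSet_closedBall.diff (hmSB1.union hmSB2)
    have hmSD4 : MeasurableSet SD4 := measurableSet_ball.compl
    have hcov : ∀ x : Esp n, x ∈ SB1 ∨ x ∈ SB2 ∨ x ∈ SD3 ∨ x ∈ SD4 := by
      intro x
      by_cases h4 : x ∈ ball u₀ 1
      · by_cases h1 : x ∈ SB1
        · exact Or.inl h1
        · by_cases h2 : x ∈ SB2
          · exact Or.inr (Or.inl h2)
          · refine Or.inr (Or.inr (Or.inl ⟨ball_subset_closedBall h4, ?_⟩))
            intro hmem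
            rcases hmem with h | h
            exacts [h1 h, h2 h]
      · exact Or.inr (Or.inr (Or.inr h4))
    -- region SB1
    have hb1 : (∫⁻ u : Esp n in SB1, f u) ≤ ENNReal.ofReal (cR1 * ‖u₀ - u₁‖ ^ (-((n:ℝ) - 2 * (m:ℝ) * ((a:ℝ) + 1)))) := by
      have hpt : ∀ u ∈ SB1, f u ≤
          ENNReal.ofReal (cmp1 * cmp3 * (‖u₀ - u₁‖ / 2) ^ (-((n:ℝ) - 2 * (m:ℝ)))) *
            ENNReal.ofReal (‖u - u₀‖ ^ (2 * (m:ℝ) * (a:ℝ) - (n:ℝ))) := by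
        intro u hu
        rw [← ENNReal.ofReal_mul (by positivity)]
        apply ENNReal.ofReal_le_ofReal
        have h1 : ‖u - u₀‖ < ‖u₀ - u₁‖ / 2 := mem_ball_iff_norm.mp hu
        have ht3lo : ‖u₀ - u₁‖ / 2 ≤ ‖u - u₁‖ := by
          have h2 := htri u
          rw [norm_sub_rev u₀ u] at h2
          linarith
        have ht3hi : ‖u - u₁‖ ≤ 2 := by
          have h2 : ‖u - u₁‖ ≤ ‖u - u₀‖ + ‖u₀ - u₁‖ := by
            simpa [dist_eq_norm] using dist_triangle u u₀ u₁
          linarith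
        have hK3 : Real.sqrt (1 + ‖u - u₁‖ ^ 2) ^ (((n:ℝ) + 1) / 2 - 2 * (m:ℝ)) / ‖u - u₁‖ ^ ((n:ℝ) - 2 * (m:ℝ)) ≤ cmp3 * (‖u₀ - u₁‖ / 2) ^ (-((n:ℝ) - 2 * (m:ℝ))) := by
          have h := KB1 (norm_nonneg (u - u₁)) ht3hi
            (q := (n:ℝ) - 2 * (m:ℝ)) (by linarith) (((n:ℝ) + 1) / 2 - 2 * (m:ℝ))
          rw [hcmp3]
          refine h.trans (mul_le_mul_of_nonneg_left ?_ (le_trans zero_le_one (le_max_left _ _)))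
          exact Real.rpow_le_rpow_of_nonpos hρ0 ht3lo (by linarith)
        have hK1 : Real.sqrt (1 + ‖u₀ - u‖ ^ 2) ^ (((n:ℝ) + 1) / 2 - 2 * (m:ℝ) * (a:ℝ)) / ‖u₀ - u‖ ^ ((n:ℝ) - 2 * (m:ℝ) * (a:ℝ)) ≤ cmp1 * ‖u - u₀‖ ^ (2 * (m:ℝ) * (a:ℝ) - (n:ℝ)) := by
          rw [norm_sub_rev u₀ u]
          have h := KB1 (norm_nonneg (u - u₀)) (by linarith)
            (q := (n:ℝ) - 2 * (m:ℝ) * (a:ℝ)) (by linarith) (((n:ℝ) + 1) / 2 - 2 * (m:ℝ) * (a:ℝ))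
          rw [hcmp1]
          refine h.trans (le_of_eq ?_)
          rw [show -((n:ℝ) - 2 * (m:ℝ) * (a:ℝ)) = 2 * (m:ℝ) * (a:ℝ) - (n:ℝ) by ring]
        calc (Real.sqrt (1 + ‖u₀ - u‖ ^ 2) ^ (((n:ℝ) + 1) / 2 - 2 * (m:ℝ) * (a:ℝ)) / ‖u₀ - u‖ ^ ((n:ℝ) - 2 * (m:ℝ) * (a:ℝ))) * Real.sqrt (1 + ‖u‖ ^ 2) ^ (-(((n:ℝ) + 1) / 2) - δ) * (Real.sqrt (1 + ‖u - u₁‖ ^ 2) ^ (((n:ℝ) + 1) / 2 - 2 * (m:ℝ)) / ‖u - u₁‖ ^ ((n:ℝ) - 2 * (m:ℝ)))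
            ≤ (Real.sqrt (1 + ‖u₀ - u‖ ^ 2) ^ (((n:ℝ) + 1) / 2 - 2 * (m:ℝ) * (a:ℝ)) / ‖u₀ - u‖ ^ ((n:ℝ) - 2 * (m:ℝ) * (a:ℝ))) * 1 * (Real.sqrt (1 + ‖u - u₁‖ ^ 2) ^ (((n:ℝ) + 1) / 2 - 2 * (m:ℝ)) / ‖u - u₁‖ ^ ((n:ℝ) - 2 * (m:ℝ))) := by
              apply mul_le_mul_of_nonneg_right
                (mul_le_mul_of_nonneg_left (hwle u) (by positivity)) (by positivity)
          _ = (Real.sqrt (1 + ‖u₀ - u‖ ^ 2) ^ (((n:ℝ) + 1) / 2 - 2 * (m:ℝ) * (a:ℝ)) / ‖u₀ - u‖ ^ ((n:ℝ) - 2 * (m:ℝ) * (a:ℝ))) * (Real.sqrt (1 + ‖u - u₁‖ ^ 2) ^ (((n:ℝ) + 1) / 2 - 2 * (m:ℝ)) / ‖u - u₁‖ ^ ((n:ℝ) - 2 * (m:ℝ))) := by ring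
          _ ≤ (cmp1 * ‖u - u₀‖ ^ (2 * (m:ℝ) * (a:ℝ) - (n:ℝ))) * (cmp3 * (‖u₀ - u₁‖ / 2) ^ (-((n:ℝ) - 2 * (m:ℝ)))) := by
              apply mul_le_mul hK1 hK3 (by positivity)
              positivity
          _ = cmp1 * cmp3 * (‖u₀ - u₁‖ / 2) ^ (-((n:ℝ) - 2 * (m:ℝ))) * ‖u - u₀‖ ^ (2 * (m:ℝ) * (a:ℝ) - (n:ℝ)) := by ring
      calc (∫⁻ u : Esp n in SB1, f u)
          ≤ ∫⁻ u : Esp n in SB1, ENNReal.ofReal (cmp1 * cmp3 * (‖u₀ - u₁‖ / 2) ^ (-((n:ℝ) - 2 * (m:ℝ)))) *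
              ENNReal.ofReal (‖u - u₀‖ ^ (2 * (m:ℝ) * (a:ℝ) - (n:ℝ))) :=
            setLIntegral_mono' hmSB1 hpt
        _ = ENNReal.ofReal (cmp1 * cmp3 * (‖u₀ - u₁‖ / 2) ^ (-((n:ℝ) - 2 * (m:ℝ)))) *
              ∫⁻ u : Esp n in SB1, ENNReal.ofReal (‖u - u₀‖ ^ (2 * (m:ℝ) * (a:ℝ) - (n:ℝ))) :=
            lintegral_const_mul _ (by fun_prop)
        _ = ENNReal.ofReal (cmp1 * cmp3 * (‖u₀ - u₁‖ / 2) ^ (-((n:ℝ) - 2 * (m:ℝ)))) *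
              (ENNReal.ofReal ((‖u₀ - u₁‖ / 2) ^ (2 * (m:ℝ) * (a:ℝ))) * B1c) := by
            rw [hB1 u₀ (‖u₀ - u₁‖ / 2) hρ0]
        _ = ENNReal.ofReal (cmp1 * cmp3 * (‖u₀ - u₁‖ / 2) ^ (-((n:ℝ) - 2 * (m:ℝ))) * ((‖u₀ - u₁‖ / 2) ^ (2 * (m:ℝ) * (a:ℝ)) * rB1)) := by
            rw [hB1', ← ENNReal.ofReal_mul (by positivity),
              ← ENNReal.ofReal_mul (by positivity)]
        _ ≤ ENNReal.ofReal (cR1 * ‖u₀ - u₁‖ ^ (-((n:ℝ) - 2 * (m:ℝ) * ((a:ℝ) + 1)))) := by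
            apply ENNReal.ofReal_le_ofReal
            apply le_of_eq
            rw [hcR1]
            rw [show cmp1 * cmp3 * (‖u₀ - u₁‖ / 2) ^ (-((n:ℝ) - 2 * (m:ℝ))) * ((‖u₀ - u₁‖ / 2) ^ (2 * (m:ℝ) * (a:ℝ)) * rB1)
              = cmp1 * cmp3 * rB1 * (((‖u₀ - u₁‖ / 2) ^ (-((n:ℝ) - 2 * (m:ℝ))) * (‖u₀ - u₁‖ / 2) ^ (2 * (m:ℝ) * (a:ℝ)))) by ring,
              ← Real.rpow_add hρ0,
              show -((n:ℝ) - 2 * (m:ℝ)) + (2 * (m:ℝ) * (a:ℝ)) = -((n:ℝ) - 2 * (m:ℝ) * ((a:ℝ) + 1)) by ring,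
              half_rpow hr0, show -(-((n:ℝ) - 2 * (m:ℝ) * ((a:ℝ) + 1))) = (n:ℝ) - 2 * (m:ℝ) * ((a:ℝ) + 1) by ring]
            ring
    -- region SB2
    have hb2 : (∫⁻ u : Esp n in SB2, f u) ≤ ENNReal.ofReal (cR2 * ‖u₀ - u₁‖ ^ (-((n:ℝ) - 2 * (m:ℝ) * ((a:ℝ) + 1)))) := by
      have hpt : ∀ u ∈ SB2, f u ≤
          ENNReal.ofReal (cmp1 * cmp3 * (‖u₀ - u₁‖ / 2) ^ (-((n:ℝ) - 2 * (m:ℝ) * (a:ℝ)))) *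
            ENNReal.ofReal (‖u - u₁‖ ^ (2 * (m:ℝ) - (n:ℝ))) := by
        intro u hu
        rw [← ENNReal.ofReal_mul (by positivity)]
        apply ENNReal.ofReal_le_ofReal
        have h1 : ‖u - u₁‖ < ‖u₀ - u₁‖ / 2 := mem_ball_iff_norm.mp hu
        have ht1lo : ‖u₀ - u₁‖ / 2 ≤ ‖u₀ - u‖ := by
          have h2 := htri u
          linarith
        have ht1hi : ‖u₀ - u‖ ≤ 2 := by
          have h2 : ‖u₀ - u‖ ≤ ‖u₀ - u₁‖ + ‖u₁ - u‖ := by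
            simpa [dist_eq_norm] using dist_triangle u₀ u₁ u
          rw [norm_sub_rev u₁ u] at h2
          linarith
        have hK1 : Real.sqrt (1 + ‖u₀ - u‖ ^ 2) ^ (((n:ℝ) + 1) / 2 - 2 * (m:ℝ) * (a:ℝ)) / ‖u₀ - u‖ ^ ((n:ℝ) - 2 * (m:ℝ) * (a:ℝ)) ≤ cmp1 * (‖u₀ - u₁‖ / 2) ^ (-((n:ℝ) - 2 * (m:ℝ) * (a:ℝ))) := by
          have h := KB1 (norm_nonneg (u₀ - u)) ht1hi
            (q := (n:ℝ) - 2 * (m:ℝ) * (a:ℝ)) (by linarith) (((n:ℝ) + 1) / 2 - 2 * (m:ℝ) * (a:ℝ))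
          rw [hcmp1]
          refine h.trans (mul_le_mul_of_nonneg_left ?_ (le_trans zero_le_one (le_max_left _ _)))
          exact Real.rpow_le_rpow_of_nonpos hρ0 ht1lo (by linarith)
        have hK3 : Real.sqrt (1 + ‖u - u₁‖ ^ 2) ^ (((n:ℝ) + 1) / 2 - 2 * (m:ℝ)) / ‖u - u₁‖ ^ ((n:ℝ) - 2 * (m:ℝ)) ≤ cmp3 * ‖u - u₁‖ ^ (2 * (m:ℝ) - (n:ℝ)) := by
          have h := KB1 (norm_nonneg (u - u₁)) (by linarith)
            (q := (n:ℝ) - 2 * (m:ℝ)) (by linarith) (((n:ℝ) + 1) / 2 - 2 * (m:ℝ))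
          rw [hcmp3]
          refine h.trans (le_of_eq ?_)
          rw [show -((n:ℝ) - 2 * (m:ℝ)) = 2 * (m:ℝ) - (n:ℝ) by ring]
        calc (Real.sqrt (1 + ‖u₀ - u‖ ^ 2) ^ (((n:ℝ) + 1) / 2 - 2 * (m:ℝ) * (a:ℝ)) / ‖u₀ - u‖ ^ ((n:ℝ) - 2 * (m:ℝ) * (a:ℝ))) * Real.sqrt (1 + ‖u‖ ^ 2) ^ (-(((n:ℝ) + 1) / 2) - δ) * (Real.sqrt (1 + ‖u - u₁‖ ^ 2) ^ (((n:ℝ) + 1) / 2 - 2 * (m:ℝ)) / ‖u - u₁‖ ^ ((n:ℝ) - 2 * (m:ℝ)))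
            ≤ (Real.sqrt (1 + ‖u₀ - u‖ ^ 2) ^ (((n:ℝ) + 1) / 2 - 2 * (m:ℝ) * (a:ℝ)) / ‖u₀ - u‖ ^ ((n:ℝ) - 2 * (m:ℝ) * (a:ℝ))) * 1 * (Real.sqrt (1 + ‖u - u₁‖ ^ 2) ^ (((n:ℝ) + 1) / 2 - 2 * (m:ℝ)) / ‖u - u₁‖ ^ ((n:ℝ) - 2 * (m:ℝ))) := by
              apply mul_le_mul_of_nonneg_right
                (mul_le_mul_of_nonneg_left (hwle u) (by positivity)) (by positivity)
          _ = (Real.sqrt (1 + ‖u₀ - u‖ ^ 2) ^ (((n:ℝ) + 1) / 2 - 2 * (m:ℝ) * (a:ℝ)) / ‖u₀ - u‖ ^ ((n:ℝ) - 2 * (m:ℝ) * (a:ℝ))) * (Real.sqrt (1 + ‖u - u₁‖ ^ 2) ^ (((n:ℝ) + 1) / 2 - 2 * (m:ℝ)) / ‖u - u₁‖ ^ ((n:ℝ) - 2 * (m:ℝ))) := by ring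
          _ ≤ (cmp1 * (‖u₀ - u₁‖ / 2) ^ (-((n:ℝ) - 2 * (m:ℝ) * (a:ℝ)))) * (cmp3 * ‖u - u₁‖ ^ (2 * (m:ℝ) - (n:ℝ))) := by
              apply mul_le_mul hK1 hK3 (by positivity)
              positivity
          _ = cmp1 * cmp3 * (‖u₀ - u₁‖ / 2) ^ (-((n:ℝ) - 2 * (m:ℝ) * (a:ℝ))) * ‖u - u₁‖ ^ (2 * (m:ℝ) - (n:ℝ)) := by ring
      calc (∫⁻ u : Esp n in SB2, f u)
          ≤ ∫⁻ u : Esp n in SB2, ENNReal.ofReal (cmp1 * cmp3 * (‖u₀ - u₁‖ / 2) ^ (-((n:ℝ) - 2 * (m:ℝ) * (a:ℝ)))) *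
              ENNReal.ofReal (‖u - u₁‖ ^ (2 * (m:ℝ) - (n:ℝ))) :=
            setLIntegral_mono' hmSB2 hpt
        _ = ENNReal.ofReal (cmp1 * cmp3 * (‖u₀ - u₁‖ / 2) ^ (-((n:ℝ) - 2 * (m:ℝ) * (a:ℝ)))) *
              ∫⁻ u : Esp n in SB2, ENNReal.ofReal (‖u - u₁‖ ^ (2 * (m:ℝ) - (n:ℝ))) :=
            lintegral_const_mul _ (by fun_prop)
        _ = ENNReal.ofReal (cmp1 * cmp3 * (‖u₀ - u₁‖ / 2) ^ (-((n:ℝ) - 2 * (m:ℝ) * (a:ℝ)))) *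
              (ENNReal.ofReal ((‖u₀ - u₁‖ / 2) ^ (2 * (m:ℝ))) * B3c) := by
            rw [hB3 u₁ (‖u₀ - u₁‖ / 2) hρ0]
        _ = ENNReal.ofReal (cmp1 * cmp3 * (‖u₀ - u₁‖ / 2) ^ (-((n:ℝ) - 2 * (m:ℝ) * (a:ℝ))) * ((‖u₀ - u₁‖ / 2) ^ (2 * (m:ℝ)) * rB3)) := by
            rw [hB3', ← ENNReal.ofReal_mul (by positivity),
              ← ENNReal.ofReal_mul (by positivity)]
        _ ≤ ENNReal.ofReal (cR2 * ‖u₀ - u₁‖ ^ (-((n:ℝ) - 2 * (m:ℝ) * ((a:ℝ) + 1)))) := by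
            apply ENNReal.ofReal_le_ofReal
            apply le_of_eq
            rw [hcR2]
            rw [show cmp1 * cmp3 * (‖u₀ - u₁‖ / 2) ^ (-((n:ℝ) - 2 * (m:ℝ) * (a:ℝ))) * ((‖u₀ - u₁‖ / 2) ^ (2 * (m:ℝ)) * rB3)
              = cmp1 * cmp3 * rB3 * (((‖u₀ - u₁‖ / 2) ^ (-((n:ℝ) - 2 * (m:ℝ) * (a:ℝ))) * (‖u₀ - u₁‖ / 2) ^ (2 * (m:ℝ)))) by ring,
              ← Real.rpow_add hρ0,
              show -((n:ℝ) - 2 * (m:ℝ) * (a:ℝ)) + (2 * (m:ℝ)) = -((n:ℝ) - 2 * (m:ℝ) * ((a:ℝ) + 1)) by ring,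
              half_rpow hr0, show -(-((n:ℝ) - 2 * (m:ℝ) * ((a:ℝ) + 1))) = (n:ℝ) - 2 * (m:ℝ) * ((a:ℝ) + 1) by ring]
            ring
    -- region SD3
    have hb3 : (∫⁻ u : Esp n in SD3, f u) ≤ ENNReal.ofReal (cR3 * ‖u₀ - u₁‖ ^ (-((n:ℝ) - 2 * (m:ℝ) * ((a:ℝ) + 1)))) := by
      have hpt : ∀ u ∈ SD3, f u ≤
          ENNReal.ofReal (cmp1 * cmp3) *
            (ENNReal.ofReal (‖u - u₀‖ ^ (-(2 * (n:ℝ) - 2 * (m:ℝ) * ((a:ℝ) + 1)))) +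
             ENNReal.ofReal (‖u - u₁‖ ^ (-(2 * (n:ℝ) - 2 * (m:ℝ) * ((a:ℝ) + 1))))) := by
        intro u hu
        obtain ⟨huc, hun⟩ := hu
        have ht1hi : ‖u - u₀‖ ≤ 1 := mem_closedBall_iff_norm.mp huc
        have ht1lo : ‖u₀ - u₁‖ / 2 ≤ ‖u - u₀‖ := by
          by_contra hcon
          exact hun (Or.inl (mem_ball_iff_norm.mpr (by linarith)))
        have ht3lo : ‖u₀ - u₁‖ / 2 ≤ ‖u - u₁‖ := by
          by_contra hcon
          exact hun (Or.inr (mem_ball_iff_norm.mpr (by linarith)))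
        have ht3hi : ‖u - u₁‖ ≤ 2 := by
          have h2 : ‖u - u₁‖ ≤ ‖u - u₀‖ + ‖u₀ - u₁‖ := by
            simpa [dist_eq_norm] using dist_triangle u u₀ u₁
          linarith
        rw [← ENNReal.ofReal_add (by positivity) (by positivity),
          ← ENNReal.ofReal_mul (by positivity)]
        apply ENNReal.ofReal_le_ofReal
        have hK1 : Real.sqrt (1 + ‖u₀ - u‖ ^ 2) ^ (((n:ℝ) + 1) / 2 - 2 * (m:ℝ) * (a:ℝ)) / ‖u₀ - u‖ ^ ((n:ℝ) - 2 * (m:ℝ) * (a:ℝ)) ≤ cmp1 * ‖u - u₀‖ ^ (-((n:ℝ) - 2 * (m:ℝ) * (a:ℝ))) := by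
          rw [norm_sub_rev u₀ u]
          rw [hcmp1]
          exact KB1 (norm_nonneg (u - u₀)) (by linarith)
            (q := (n:ℝ) - 2 * (m:ℝ) * (a:ℝ)) (by linarith) (((n:ℝ) + 1) / 2 - 2 * (m:ℝ) * (a:ℝ))
        have hK3 : Real.sqrt (1 + ‖u - u₁‖ ^ 2) ^ (((n:ℝ) + 1) / 2 - 2 * (m:ℝ)) / ‖u - u₁‖ ^ ((n:ℝ) - 2 * (m:ℝ)) ≤ cmp3 * ‖u - u₁‖ ^ (-((n:ℝ) - 2 * (m:ℝ))) := by
          rw [hcmp3]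
          exact KB1 (norm_nonneg (u - u₁)) ht3hi
            (q := (n:ℝ) - 2 * (m:ℝ)) (by linarith) (((n:ℝ) + 1) / 2 - 2 * (m:ℝ))
        have hprod : ‖u - u₀‖ ^ (-((n:ℝ) - 2 * (m:ℝ) * (a:ℝ))) * ‖u - u₁‖ ^ (-((n:ℝ) - 2 * (m:ℝ)))
            ≤ ‖u - u₀‖ ^ (-(2 * (n:ℝ) - 2 * (m:ℝ) * ((a:ℝ) + 1))) + ‖u - u₁‖ ^ (-(2 * (n:ℝ) - 2 * (m:ℝ) * ((a:ℝ) + 1))) := by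
          have h10 : 0 < ‖u - u₀‖ := lt_of_lt_of_le hρ0 ht1lo
          have h30 : 0 < ‖u - u₁‖ := lt_of_lt_of_le hρ0 ht3lo
          rcases le_total ‖u - u₀‖ ‖u - u₁‖ with hle | hle
          · have h5 : ‖u - u₁‖ ^ (-((n:ℝ) - 2 * (m:ℝ))) ≤ ‖u - u₀‖ ^ (-((n:ℝ) - 2 * (m:ℝ))) :=
              Real.rpow_le_rpow_of_nonpos h10 hle (by linarith)
            calc ‖u - u₀‖ ^ (-((n:ℝ) - 2 * (m:ℝ) * (a:ℝ))) * ‖u - u₁‖ ^ (-((n:ℝ) - 2 * (m:ℝ)))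
                ≤ ‖u - u₀‖ ^ (-((n:ℝ) - 2 * (m:ℝ) * (a:ℝ))) * ‖u - u₀‖ ^ (-((n:ℝ) - 2 * (m:ℝ))) :=
                  mul_le_mul_of_nonneg_left h5 (by positivity)
              _ = ‖u - u₀‖ ^ (-(2 * (n:ℝ) - 2 * (m:ℝ) * ((a:ℝ) + 1))) := by
                  rw [← Real.rpow_add h10]
                  congr 1
                  ring
              _ ≤ _ := le_add_of_nonneg_right (by positivity)
          · have h5 : ‖u - u₀‖ ^ (-((n:ℝ) - 2 * (m:ℝ) * (a:ℝ))) ≤ ‖u - u₁‖ ^ (-((n:ℝ) - 2 * (m:ℝ) * (a:ℝ))) :=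
              Real.rpow_le_rpow_of_nonpos h30 hle (by linarith)
            calc ‖u - u₀‖ ^ (-((n:ℝ) - 2 * (m:ℝ) * (a:ℝ))) * ‖u - u₁‖ ^ (-((n:ℝ) - 2 * (m:ℝ)))
                ≤ ‖u - u₁‖ ^ (-((n:ℝ) - 2 * (m:ℝ) * (a:ℝ))) * ‖u - u₁‖ ^ (-((n:ℝ) - 2 * (m:ℝ))) :=
                  mul_le_mul_of_nonneg_right h5 (by positivity)
              _ = ‖u - u₁‖ ^ (-(2 * (n:ℝ) - 2 * (m:ℝ) * ((a:ℝ) + 1))) := by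
                  rw [← Real.rpow_add h30]
                  congr 1
                  ring
              _ ≤ _ := le_add_of_nonneg_left (by positivity)
        calc (Real.sqrt (1 + ‖u₀ - u‖ ^ 2) ^ (((n:ℝ) + 1) / 2 - 2 * (m:ℝ) * (a:ℝ)) / ‖u₀ - u‖ ^ ((n:ℝ) - 2 * (m:ℝ) * (a:ℝ))) * Real.sqrt (1 + ‖u‖ ^ 2) ^ (-(((n:ℝ) + 1) / 2) - δ) * (Real.sqrt (1 + ‖u - u₁‖ ^ 2) ^ (((n:ℝ) + 1) / 2 - 2 * (m:ℝ)) / ‖u - u₁‖ ^ ((n:ℝ) - 2 * (m:ℝ)))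
            ≤ (Real.sqrt (1 + ‖u₀ - u‖ ^ 2) ^ (((n:ℝ) + 1) / 2 - 2 * (m:ℝ) * (a:ℝ)) / ‖u₀ - u‖ ^ ((n:ℝ) - 2 * (m:ℝ) * (a:ℝ))) * 1 * (Real.sqrt (1 + ‖u - u₁‖ ^ 2) ^ (((n:ℝ) + 1) / 2 - 2 * (m:ℝ)) / ‖u - u₁‖ ^ ((n:ℝ) - 2 * (m:ℝ))) := by
              apply mul_le_mul_of_nonneg_right
                (mul_le_mul_of_nonneg_left (hwle u) (by positivity)) (by positivity)
          _ = (Real.sqrt (1 + ‖u₀ - u‖ ^ 2) ^ (((n:ℝ) + 1) / 2 - 2 * (m:ℝ) * (a:ℝ)) / ‖u₀ - u‖ ^ ((n:ℝ) - 2 * (m:ℝ) * (a:ℝ))) * (Real.sqrt (1 + ‖u - u₁‖ ^ 2) ^ (((n:ℝ) + 1) / 2 - 2 * (m:ℝ)) / ‖u - u₁‖ ^ ((n:ℝ) - 2 * (m:ℝ))) := by ring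
          _ ≤ (cmp1 * ‖u - u₀‖ ^ (-((n:ℝ) - 2 * (m:ℝ) * (a:ℝ)))) *
                (cmp3 * ‖u - u₁‖ ^ (-((n:ℝ) - 2 * (m:ℝ)))) := by
              apply mul_le_mul hK1 hK3 (by positivity)
              positivity
          _ = cmp1 * cmp3 * (‖u - u₀‖ ^ (-((n:ℝ) - 2 * (m:ℝ) * (a:ℝ))) * ‖u - u₁‖ ^ (-((n:ℝ) - 2 * (m:ℝ)))) := by
              ring
          _ ≤ cmp1 * cmp3 * (‖u - u₀‖ ^ (-(2 * (n:ℝ) - 2 * (m:ℝ) * ((a:ℝ) + 1))) + ‖u - u₁‖ ^ (-(2 * (n:ℝ) - 2 * (m:ℝ) * ((a:ℝ) + 1)))) := by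
              apply mul_le_mul_of_nonneg_left hprod (by positivity)
      calc (∫⁻ u : Esp n in SD3, f u)
          ≤ ∫⁻ u : Esp n in SD3, ENNReal.ofReal (cmp1 * cmp3) *
              (ENNReal.ofReal (‖u - u₀‖ ^ (-(2 * (n:ℝ) - 2 * (m:ℝ) * ((a:ℝ) + 1)))) +
               ENNReal.ofReal (‖u - u₁‖ ^ (-(2 * (n:ℝ) - 2 * (m:ℝ) * ((a:ℝ) + 1))))) :=
            setLIntegral_mono' hmSD3 hpt
        _ = ENNReal.ofReal (cmp1 * cmp3) *
              ∫⁻ u : Esp n in SD3, (ENNReal.ofReal (‖u - u₀‖ ^ (-(2 * (n:ℝ) - 2 * (m:ℝ) * ((a:ℝ) + 1)))) +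
               ENNReal.ofReal (‖u - u₁‖ ^ (-(2 * (n:ℝ) - 2 * (m:ℝ) * ((a:ℝ) + 1))))) :=
            lintegral_const_mul _ (by fun_prop)
        _ = ENNReal.ofReal (cmp1 * cmp3) *
              ((∫⁻ u : Esp n in SD3, ENNReal.ofReal (‖u - u₀‖ ^ (-(2 * (n:ℝ) - 2 * (m:ℝ) * ((a:ℝ) + 1))))) +
               (∫⁻ u : Esp n in SD3, ENNReal.ofReal (‖u - u₁‖ ^ (-(2 * (n:ℝ) - 2 * (m:ℝ) * ((a:ℝ) + 1)))))) := by
            rw [lintegral_add_left (by fun_prop)]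
        _ ≤ ENNReal.ofReal (cmp1 * cmp3) *
              ((∫⁻ u : Esp n in (ball u₀ (‖u₀ - u₁‖ / 2))ᶜ, ENNReal.ofReal (‖u - u₀‖ ^ (-(2 * (n:ℝ) - 2 * (m:ℝ) * ((a:ℝ) + 1))))) +
               (∫⁻ u : Esp n in (ball u₁ (‖u₀ - u₁‖ / 2))ᶜ, ENNReal.ofReal (‖u - u₁‖ ^ (-(2 * (n:ℝ) - 2 * (m:ℝ) * ((a:ℝ) + 1)))))) := by
            apply mul_le_mul_right
            apply add_le_add
            · apply lintegral_mono_set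
              intro x hx
              simp only [mem_compl_iff, hSB1] at hx ⊢
              exact fun hmem => hx.2 (Or.inl hmem)
            · apply lintegral_mono_set
              intro x hx
              simp only [mem_compl_iff, hSB2] at hx ⊢
              exact fun hmem => hx.2 (Or.inr hmem)
        _ = ENNReal.ofReal (cmp1 * cmp3) *
              (ENNReal.ofReal ((‖u₀ - u₁‖ / 2) ^ ((n:ℝ) - (2 * (n:ℝ) - 2 * (m:ℝ) * ((a:ℝ) + 1)))) * Cx +
               ENNReal.ofReal ((‖u₀ - u₁‖ / 2) ^ ((n:ℝ) - (2 * (n:ℝ) - 2 * (m:ℝ) * ((a:ℝ) + 1)))) * Cx) := by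
            rw [hCx u₀ (‖u₀ - u₁‖ / 2) hρ0, hCx u₁ (‖u₀ - u₁‖ / 2) hρ0]
        _ = ENNReal.ofReal (cmp1 * cmp3 * (2 * ((‖u₀ - u₁‖ / 2) ^ ((n:ℝ) - (2 * (n:ℝ) - 2 * (m:ℝ) * ((a:ℝ) + 1))) * rCx))) := by
            rw [hCx', ← ENNReal.ofReal_mul (by positivity),
              ← ENNReal.ofReal_add (by positivity) (by positivity),
              ← ENNReal.ofReal_mul (by positivity)]
            congr 1
            ring
        _ ≤ ENNReal.ofReal (cR3 * ‖u₀ - u₁‖ ^ (-((n:ℝ) - 2 * (m:ℝ) * ((a:ℝ) + 1)))) := by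
            apply ENNReal.ofReal_le_ofReal
            apply le_of_eq
            rw [hcR3,
              show (n:ℝ) - (2 * (n:ℝ) - 2 * (m:ℝ) * ((a:ℝ) + 1)) = -((n:ℝ) - 2 * (m:ℝ) * ((a:ℝ) + 1)) by ring,
              half_rpow hr0, show -(-((n:ℝ) - 2 * (m:ℝ) * ((a:ℝ) + 1))) = (n:ℝ) - 2 * (m:ℝ) * ((a:ℝ) + 1) by ring]
            ring
    -- region SD4
    have hb4 : (∫⁻ u : Esp n in SD4, f u) ≤ ENNReal.ofReal (cR4 * ‖u₀ - u₁‖ ^ (-((n:ℝ) - 2 * (m:ℝ) * ((a:ℝ) + 1)))) := by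
      have hpt : ∀ u ∈ SD4, f u ≤
          ENNReal.ofReal ck * ENNReal.ofReal ((Real.sqrt (1 + ‖u - u₁‖ ^ 2) ^ (((n:ℝ) + 1) / 2 - 2 * (m:ℝ)) / ‖u - u₁‖ ^ ((n:ℝ) - 2 * (m:ℝ))) * Real.sqrt (1 + ‖u‖ ^ 2) ^ (-(((n:ℝ) + 1) / 2) - δ)) := by
        intro u hu
        rw [← ENNReal.ofReal_mul hck0]
        apply ENNReal.ofReal_le_ofReal
        have ht1 : (1:ℝ) ≤ ‖u₀ - u‖ := by
          rw [norm_sub_rev u₀ u]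
          by_contra hcon
          exact hu (mem_ball_iff_norm.mpr (by linarith))
        have hK1 : Real.sqrt (1 + ‖u₀ - u‖ ^ 2) ^ (((n:ℝ) + 1) / 2 - 2 * (m:ℝ) * (a:ℝ)) / ‖u₀ - u‖ ^ ((n:ℝ) - 2 * (m:ℝ) * (a:ℝ)) ≤ ck := by
          have h := KB3 (t := ‖u₀ - u‖) (by linarith)
            (q := (n:ℝ) - 2 * (m:ℝ) * (a:ℝ)) (by linarith) (((n:ℝ) + 1) / 2 - 2 * (m:ℝ) * (a:ℝ))
          rw [hck]
          refine h.trans ?_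
          rw [show (((n:ℝ) + 1) / 2 - 2 * (m:ℝ) * (a:ℝ)) - ((n:ℝ) - 2 * (m:ℝ) * (a:ℝ)) = ((n:ℝ) + 1) / 2 - (n:ℝ) by ring]
          calc (max 1 (Real.sqrt 2 ^ (-(((n:ℝ) + 1) / 2 - 2 * (m:ℝ) * (a:ℝ)))) * 3 ^ ((n:ℝ) - 2 * (m:ℝ) * (a:ℝ)))
                * (1 + ‖u₀ - u‖) ^ (((n:ℝ) + 1) / 2 - (n:ℝ))
              ≤ (max 1 (Real.sqrt 2 ^ (-(((n:ℝ) + 1) / 2 - 2 * (m:ℝ) * (a:ℝ)))) * 3 ^ ((n:ℝ) - 2 * (m:ℝ) * (a:ℝ))) * 1 := by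
                apply mul_le_mul_of_nonneg_left
                  (Real.rpow_le_one_of_one_le_of_nonpos (by linarith) hαn) (by positivity)
            _ = max 1 (Real.sqrt 2 ^ (-(((n:ℝ) + 1) / 2 - 2 * (m:ℝ) * (a:ℝ)))) * 3 ^ ((n:ℝ) - 2 * (m:ℝ) * (a:ℝ)) := mul_one _
        calc (Real.sqrt (1 + ‖u₀ - u‖ ^ 2) ^ (((n:ℝ) + 1) / 2 - 2 * (m:ℝ) * (a:ℝ)) / ‖u₀ - u‖ ^ ((n:ℝ) - 2 * (m:ℝ) * (a:ℝ))) * Real.sqrt (1 + ‖u‖ ^ 2) ^ (-(((n:ℝ) + 1) / 2) - δ) * (Real.sqrt (1 + ‖u - u₁‖ ^ 2) ^ (((n:ℝ) + 1) / 2 - 2 * (m:ℝ)) / ‖u - u₁‖ ^ ((n:ℝ) - 2 * (m:ℝ)))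
            ≤ ck * Real.sqrt (1 + ‖u‖ ^ 2) ^ (-(((n:ℝ) + 1) / 2) - δ) * (Real.sqrt (1 + ‖u - u₁‖ ^ 2) ^ (((n:ℝ) + 1) / 2 - 2 * (m:ℝ)) / ‖u - u₁‖ ^ ((n:ℝ) - 2 * (m:ℝ))) := by
              apply mul_le_mul_of_nonneg_right (mul_le_mul_of_nonneg_right hK1 (by positivity))
                (by positivity)
          _ = ck * ((Real.sqrt (1 + ‖u - u₁‖ ^ 2) ^ (((n:ℝ) + 1) / 2 - 2 * (m:ℝ)) / ‖u - u₁‖ ^ ((n:ℝ) - 2 * (m:ℝ))) * Real.sqrt (1 + ‖u‖ ^ 2) ^ (-(((n:ℝ) + 1) / 2) - δ)) := by ring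
      calc (∫⁻ u : Esp n in SD4, f u)
          ≤ ∫⁻ u : Esp n in SD4, ENNReal.ofReal ck * ENNReal.ofReal ((Real.sqrt (1 + ‖u - u₁‖ ^ 2) ^ (((n:ℝ) + 1) / 2 - 2 * (m:ℝ)) / ‖u - u₁‖ ^ ((n:ℝ) - 2 * (m:ℝ))) * Real.sqrt (1 + ‖u‖ ^ 2) ^ (-(((n:ℝ) + 1) / 2) - δ)) :=
            setLIntegral_mono' hmSD4 hpt
        _ ≤ ∫⁻ u : Esp n, ENNReal.ofReal ck * ENNReal.ofReal ((Real.sqrt (1 + ‖u - u₁‖ ^ 2) ^ (((n:ℝ) + 1) / 2 - 2 * (m:ℝ)) / ‖u - u₁‖ ^ ((n:ℝ) - 2 * (m:ℝ))) * Real.sqrt (1 + ‖u‖ ^ 2) ^ (-(((n:ℝ) + 1) / 2) - δ)) :=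
            setLIntegral_le_lintegral _ _
        _ = ENNReal.ofReal ck * ∫⁻ u : Esp n, ENNReal.ofReal ((Real.sqrt (1 + ‖u - u₁‖ ^ 2) ^ (((n:ℝ) + 1) / 2 - 2 * (m:ℝ)) / ‖u - u₁‖ ^ ((n:ℝ) - 2 * (m:ℝ))) * Real.sqrt (1 + ‖u‖ ^ 2) ^ (-(((n:ℝ) + 1) / 2) - δ)) :=
            lintegral_const_mul _ (by fun_prop)
        _ ≤ ENNReal.ofReal ck * ENNReal.ofReal rM3 := by
            apply mul_le_mul_right
            exact (hM3 u₁).trans_eq (by rw [hM3'])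
        _ = ENNReal.ofReal (ck * rM3) := by rw [← ENNReal.ofReal_mul hck0]
        _ ≤ ENNReal.ofReal (cR4 * ‖u₀ - u₁‖ ^ (-((n:ℝ) - 2 * (m:ℝ) * ((a:ℝ) + 1)))) := by
            apply ENNReal.ofReal_le_ofReal
            rw [hcR4]
            have h1 : (1:ℝ) ≤ ‖u₀ - u₁‖ ^ (-((n:ℝ) - 2 * (m:ℝ) * ((a:ℝ) + 1))) :=
              Real.one_le_rpow_of_pos_of_le_one_of_nonpos hr0 hr1.le (by linarith)
            calc ck * rM3 = ck * rM3 * 1 := (mul_one _).symm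
              _ ≤ ck * rM3 * ‖u₀ - u₁‖ ^ (-((n:ℝ) - 2 * (m:ℝ) * ((a:ℝ) + 1))) := by
                  apply mul_le_mul_of_nonneg_left h1 (by positivity)
    -- combine the four regions
    have hcovle := cover_le f SB1 SB2 SD3 SD4 hcov
    have hfin : cR1 * ‖u₀ - u₁‖ ^ (-((n:ℝ) - 2 * (m:ℝ) * ((a:ℝ) + 1))) + cR2 * ‖u₀ - u₁‖ ^ (-((n:ℝ) - 2 * (m:ℝ) * ((a:ℝ) + 1))) + cR3 * ‖u₀ - u₁‖ ^ (-((n:ℝ) - 2 * (m:ℝ) * ((a:ℝ) + 1)))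
        + cR4 * ‖u₀ - u₁‖ ^ (-((n:ℝ) - 2 * (m:ℝ) * ((a:ℝ) + 1)))
        ≤ (cC1 + (cR1 + cR2 + cR3 + cR4) * ce) * (Real.sqrt (1 + ‖u₀ - u₁‖ ^ 2) ^ (((n:ℝ) + 1) / 2 - 2 * (m:ℝ) * ((a:ℝ) + 1)) * ‖u₀ - u₁‖ ^ (-((n:ℝ) - 2 * (m:ℝ) * ((a:ℝ) + 1)))) := by
      have hone : (1:ℝ) ≤ ce * Real.sqrt (1 + ‖u₀ - u₁‖ ^ 2) ^ (((n:ℝ) + 1) / 2 - 2 * (m:ℝ) * ((a:ℝ) + 1)) := by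
        rw [hce]
        exact one_le_c_g hr0.le hr1.le _
      have hsum0 : (0:ℝ) ≤ cR1 + cR2 + cR3 + cR4 := by positivity
      calc cR1 * ‖u₀ - u₁‖ ^ (-((n:ℝ) - 2 * (m:ℝ) * ((a:ℝ) + 1))) + cR2 * ‖u₀ - u₁‖ ^ (-((n:ℝ) - 2 * (m:ℝ) * ((a:ℝ) + 1))) + cR3 * ‖u₀ - u₁‖ ^ (-((n:ℝ) - 2 * (m:ℝ) * ((a:ℝ) + 1)))
            + cR4 * ‖u₀ - u₁‖ ^ (-((n:ℝ) - 2 * (m:ℝ) * ((a:ℝ) + 1)))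
          = (cR1 + cR2 + cR3 + cR4) * (1 * ‖u₀ - u₁‖ ^ (-((n:ℝ) - 2 * (m:ℝ) * ((a:ℝ) + 1)))) := by ring
        _ ≤ (cR1 + cR2 + cR3 + cR4) * ((ce * Real.sqrt (1 + ‖u₀ - u₁‖ ^ 2) ^ (((n:ℝ) + 1) / 2 - 2 * (m:ℝ) * ((a:ℝ) + 1))) * ‖u₀ - u₁‖ ^ (-((n:ℝ) - 2 * (m:ℝ) * ((a:ℝ) + 1)))) := by
            apply mul_le_mul_of_nonneg_left
              (mul_le_mul_of_nonneg_right hone (Real.rpow_nonneg hr0.le _)) hsum0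
        _ = ((cR1 + cR2 + cR3 + cR4) * ce) * (Real.sqrt (1 + ‖u₀ - u₁‖ ^ 2) ^ (((n:ℝ) + 1) / 2 - 2 * (m:ℝ) * ((a:ℝ) + 1)) * ‖u₀ - u₁‖ ^ (-((n:ℝ) - 2 * (m:ℝ) * ((a:ℝ) + 1)))) := by ring
        _ ≤ (cC1 + (cR1 + cR2 + cR3 + cR4) * ce) * (Real.sqrt (1 + ‖u₀ - u₁‖ ^ 2) ^ (((n:ℝ) + 1) / 2 - 2 * (m:ℝ) * ((a:ℝ) + 1)) * ‖u₀ - u₁‖ ^ (-((n:ℝ) - 2 * (m:ℝ) * ((a:ℝ) + 1)))) := by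
            apply mul_le_mul_of_nonneg_right _ hGnn
            linarith
    calc (∫⁻ u : Esp n, f u)
        ≤ ∫⁻ u : Esp n, (SB1.indicator f u + SB2.indicator f u
            + SD3.indicator f u + SD4.indicator f u) :=
          lintegral_mono hcovle
      _ = (∫⁻ u : Esp n, SB1.indicator f u) + (∫⁻ u : Esp n, SB2.indicator f u)
          + (∫⁻ u : Esp n, SD3.indicator f u) + (∫⁻ u : Esp n, SD4.indicator f u) := by
          rw [lintegral_add_right _ (hfm.indicator hmSD4),
            lintegral_add_right _ (hfm.indicator hmSD3),
            lintegral_add_right _ (hfm.indicator hmSB2)]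
      _ = (∫⁻ u : Esp n in SB1, f u) + (∫⁻ u : Esp n in SB2, f u)
          + (∫⁻ u : Esp n in SD3, f u) + (∫⁻ u : Esp n in SD4, f u) := by
          rw [lintegral_indicator hmSB1, lintegral_indicator hmSB2,
            lintegral_indicator hmSD3, lintegral_indicator hmSD4]
      _ ≤ ENNReal.ofReal (cR1 * ‖u₀ - u₁‖ ^ (-((n:ℝ) - 2 * (m:ℝ) * ((a:ℝ) + 1)))) + ENNReal.ofReal (cR2 * ‖u₀ - u₁‖ ^ (-((n:ℝ) - 2 * (m:ℝ) * ((a:ℝ) + 1))))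
          + ENNReal.ofReal (cR3 * ‖u₀ - u₁‖ ^ (-((n:ℝ) - 2 * (m:ℝ) * ((a:ℝ) + 1)))) + ENNReal.ofReal (cR4 * ‖u₀ - u₁‖ ^ (-((n:ℝ) - 2 * (m:ℝ) * ((a:ℝ) + 1)))) :=
          add_le_add (add_le_add (add_le_add hb1 hb2) hb3) hb4
      _ = ENNReal.ofReal (cR1 * ‖u₀ - u₁‖ ^ (-((n:ℝ) - 2 * (m:ℝ) * ((a:ℝ) + 1))) + cR2 * ‖u₀ - u₁‖ ^ (-((n:ℝ) - 2 * (m:ℝ) * ((a:ℝ) + 1)))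
          + cR3 * ‖u₀ - u₁‖ ^ (-((n:ℝ) - 2 * (m:ℝ) * ((a:ℝ) + 1))) + cR4 * ‖u₀ - u₁‖ ^ (-((n:ℝ) - 2 * (m:ℝ) * ((a:ℝ) + 1)))) := by
          rw [← ENNReal.ofReal_add (by positivity) (by positivity),
            ← ENNReal.ofReal_add (by positivity) (by positivity),
            ← ENNReal.ofReal_add (by positivity) (by positivity)]
      _ ≤ ENNReal.ofReal ((cC1 + (cR1 + cR2 + cR3 + cR4) * ce) * (Real.sqrt (1 + ‖u₀ - u₁‖ ^ 2) ^ (((n:ℝ) + 1) / 2 - 2 * (m:ℝ) * ((a:ℝ) + 1)) * ‖u₀ - u₁‖ ^ (-((n:ℝ) - 2 * (m:ℝ) * ((a:ℝ) + 1))))) :=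
          ENNReal.ofReal_le_ofReal hfin



theorem stmt_16 (n m a : ℕ) (hn : 1 ≤ n) (hm : 1 ≤ m) (ha : 1 ≤ a)
    (hna : 2 * m * (a + 1) < n) (δ : ℝ) (hδ : 0 < δ) :
    ∃ C > 0, ∀ u₀ u₁ : EuclideanSpace ℝ (Fin n), u₀ ≠ u₁ →
      (∫ u : EuclideanSpace ℝ (Fin n),
          (Real.sqrt (1 + ‖u₀ - u‖ ^ 2) ^ (((n : ℝ) + 1) / 2 - 2 * m * a) /
              ‖u₀ - u‖ ^ ((n : ℝ) - 2 * m * a)) *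
            Real.sqrt (1 + ‖u‖ ^ 2) ^ (-(((n : ℝ) + 1) / 2) - δ) *
              (Real.sqrt (1 + ‖u - u₁‖ ^ 2) ^ (((n : ℝ) + 1) / 2 - 2 * m) /
                ‖u - u₁‖ ^ ((n : ℝ) - 2 * m)))
        ≤ C * Real.sqrt (1 + ‖u₀ - u₁‖ ^ 2) ^ (((n : ℝ) + 1) / 2 - 2 * m * (a + 1)) /
            ‖u₀ - u₁‖ ^ ((n : ℝ) - 2 * m * (a + 1)) := by
  obtain ⟨c, hc0, hkey⟩ := master n m a hn hm ha hna δ hδ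
  refine ⟨c + 1, by linarith, fun u₀ u₁ hne => ?_⟩
  have hr0 : 0 < ‖u₀ - u₁‖ := by rw [norm_pos_iff, sub_ne_zero]; exact hne
  have hFnn : 0 ≤ᵐ[volume] fun u : EuclideanSpace ℝ (Fin n) =>
      (Real.sqrt (1 + ‖u₀ - u‖ ^ 2) ^ (((n : ℝ) + 1) / 2 - 2 * m * a) /
          ‖u₀ - u‖ ^ ((n : ℝ) - 2 * m * a)) *
        Real.sqrt (1 + ‖u‖ ^ 2) ^ (-(((n : ℝ) + 1) / 2) - δ) *
          (Real.sqrt (1 + ‖u - u₁‖ ^ 2) ^ (((n : ℝ) + 1) / 2 - 2 * m) /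
            ‖u - u₁‖ ^ ((n : ℝ) - 2 * m)) :=
    Filter.Eventually.of_forall fun u => by positivity
  have hFm : AEStronglyMeasurable (fun u : EuclideanSpace ℝ (Fin n) =>
      (Real.sqrt (1 + ‖u₀ - u‖ ^ 2) ^ (((n : ℝ) + 1) / 2 - 2 * m * a) /
          ‖u₀ - u‖ ^ ((n : ℝ) - 2 * m * a)) *
        Real.sqrt (1 + ‖u‖ ^ 2) ^ (-(((n : ℝ) + 1) / 2) - δ) *
          (Real.sqrt (1 + ‖u - u₁‖ ^ 2) ^ (((n : ℝ) + 1) / 2 - 2 * m) /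
            ‖u - u₁‖ ^ ((n : ℝ) - 2 * m))) volume := by
    apply Measurable.aestronglyMeasurable
    fun_prop
  rw [MeasureTheory.integral_eq_lintegral_of_nonneg_ae hFnn hFm]
  have hb := hkey u₀ u₁ hne
  have hG0 : (0:ℝ) ≤ c * (Real.sqrt (1 + ‖u₀ - u₁‖ ^ 2) ^ (((n : ℝ) + 1) / 2 - 2 * m * (a + 1))
      * ‖u₀ - u₁‖ ^ (-((n : ℝ) - 2 * m * (a + 1)))) := by positivity
  calc (∫⁻ u : EuclideanSpace ℝ (Fin n), ENNReal.ofReal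
        ((Real.sqrt (1 + ‖u₀ - u‖ ^ 2) ^ (((n : ℝ) + 1) / 2 - 2 * m * a) /
            ‖u₀ - u‖ ^ ((n : ℝ) - 2 * m * a)) *
          Real.sqrt (1 + ‖u‖ ^ 2) ^ (-(((n : ℝ) + 1) / 2) - δ) *
            (Real.sqrt (1 + ‖u - u₁‖ ^ 2) ^ (((n : ℝ) + 1) / 2 - 2 * m) /
              ‖u - u₁‖ ^ ((n : ℝ) - 2 * m)))).toReal
      ≤ (ENNReal.ofReal (c *
          (Real.sqrt (1 + ‖u₀ - u₁‖ ^ 2) ^ (((n : ℝ) + 1) / 2 - 2 * m * (a + 1))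
            * ‖u₀ - u₁‖ ^ (-((n : ℝ) - 2 * m * (a + 1)))))).toReal :=
        ENNReal.toReal_mono ENNReal.ofReal_ne_top hb
    _ = c * (Real.sqrt (1 + ‖u₀ - u₁‖ ^ 2) ^ (((n : ℝ) + 1) / 2 - 2 * m * (a + 1))
          * ‖u₀ - u₁‖ ^ (-((n : ℝ) - 2 * m * (a + 1)))) := ENNReal.toReal_ofReal hG0
    _ ≤ (c + 1) * Real.sqrt (1 + ‖u₀ - u₁‖ ^ 2) ^ (((n : ℝ) + 1) / 2 - 2 * m * (a + 1)) /
          ‖u₀ - u₁‖ ^ ((n : ℝ) - 2 * m * (a + 1)) := by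
        rw [Real.rpow_neg hr0.le, div_eq_mul_inv]
        have h1 : (0:ℝ) ≤ Real.sqrt (1 + ‖u₀ - u₁‖ ^ 2) ^ (((n : ℝ) + 1) / 2 - 2 * m * (a + 1))
            * (‖u₀ - u₁‖ ^ ((n : ℝ) - 2 * m * (a + 1)))⁻¹ := by positivity
        calc c * (Real.sqrt (1 + ‖u₀ - u₁‖ ^ 2) ^ (((n : ℝ) + 1) / 2 - 2 * m * (a + 1))
              * (‖u₀ - u₁‖ ^ ((n : ℝ) - 2 * m * (a + 1)))⁻¹)
            ≤ (c + 1) * (Real.sqrt (1 + ‖u₀ - u₁‖ ^ 2) ^ (((n : ℝ) + 1) / 2 - 2 * m * (a + 1))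
              * (‖u₀ - u₁‖ ^ ((n : ℝ) - 2 * m * (a + 1)))⁻¹) := by
              apply mul_le_mul_of_nonneg_right (by linarith) h1
          _ = (c + 1) * Real.sqrt (1 + ‖u₀ - u₁‖ ^ 2) ^ (((n : ℝ) + 1) / 2 - 2 * m * (a + 1)) *
              (‖u₀ - u₁‖ ^ ((n : ℝ) - 2 * m * (a + 1)))⁻¹ := by ring

end
end

section
/- There exists an absolute constant C > 0 such that the following holds. Let K : [0,∞) → ℂ be continuously differentiable with K integrable on (0,∞), and set M₀(s) := sup_{s ≤ ρ ≤ s+1} |K(ρ)| and M₁(s) := sup_{s ≤ ρ ≤ s+1} |K′(ρ)|. If sup_{0 < s ≤ 1} |K(s)| < ∞ and ∫₀^∞ M₀(s)^{1/2} M₁(s)^{1/2} ds < ∞, then for every t ≥ 2π, |∫₀^∞ e^{−ist/2} K(s) ds| ≤ C t^{−1/2} ( sup_{0 < s ≤ 1} |K(s)| + ∫₀^∞ M₀(s)^{1/2} M₁(s)^{1/2} ds ). -/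
open MeasureTheory Real Set

set_option maxHeartbeats 2000000 in
theorem stmt_17 :
    ∃ C > 0, ∀ K : ℝ → ℂ,
      ContDiffOn ℝ 1 K (Set.Ici 0) →
      IntegrableOn K (Set.Ioi 0) →
      BddAbove ((fun s => ‖K s‖) '' Set.Ioc 0 1) →
      IntegrableOn
        (fun s => (sSup ((fun ρ => ‖K ρ‖) '' Set.Icc s (s + 1))) ^ ((1 : ℝ) / 2) *
          (sSup ((fun ρ => ‖derivWithin K (Set.Ici 0) ρ‖) '' Set.Icc s (s + 1))) ^ ((1 : ℝ) / 2))
        (Set.Ioi 0) →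
      ∀ t : ℝ, 2 * Real.pi ≤ t →
        ‖∫ s in Set.Ioi (0 : ℝ), Complex.exp (-Complex.I * s * t / 2) * K s‖ ≤
          C * t ^ (-(1 : ℝ) / 2) *
            (sSup ((fun s => ‖K s‖) '' Set.Ioc 0 1) +
              ∫ s in Set.Ioi (0 : ℝ),
                (sSup ((fun ρ => ‖K ρ‖) '' Set.Icc s (s + 1))) ^ ((1 : ℝ) / 2) *
                  (sSup ((fun ρ => ‖derivWithin K (Set.Ici 0) ρ‖) '' Set.Icc s (s + 1))) ^
                    ((1 : ℝ) / 2)) := by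
  refine ⟨4, by norm_num, ?_⟩
  intro K hK hKint hbdd hMint t ht
  have pi_pos := Real.pi_pos
  have ht0 : 0 < t := lt_of_lt_of_le (by linarith) ht
  set S : ℝ := sSup ((fun s => ‖K s‖) '' Set.Ioc 0 1) with hSdef
  set Iv : ℝ :=
    ∫ s in Set.Ioi (0 : ℝ),
      (sSup ((fun ρ => ‖K ρ‖) '' Set.Icc s (s + 1))) ^ ((1 : ℝ) / 2) *
        (sSup ((fun ρ => ‖derivWithin K (Set.Ici 0) ρ‖) '' Set.Icc s (s + 1))) ^ ((1 : ℝ) / 2)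
    with hIvdef
  set M₀ : ℝ → ℝ := fun s => sSup ((fun ρ => ‖K ρ‖) '' Set.Icc s (s + 1)) with hM₀def
  set M₁ : ℝ → ℝ :=
    fun s => sSup ((fun ρ => ‖derivWithin K (Set.Ici 0) ρ‖) '' Set.Icc s (s + 1)) with hM₁def
  have hIvM : Iv = ∫ s in Set.Ioi (0 : ℝ), M₀ s ^ ((1 : ℝ) / 2) * M₁ s ^ ((1 : ℝ) / 2) := rfl
  have hMint' : IntegrableOn (fun s => M₀ s ^ ((1 : ℝ) / 2) * M₁ s ^ ((1 : ℝ) / 2))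
      (Set.Ioi (0 : ℝ)) := hMint
  set h : ℝ := 2 * Real.pi / t with hdef
  have h0 : 0 < h := div_pos (by linarith) ht0
  have h1 : h ≤ 1 := (div_le_one ht0).2 ht
  have hht : h * t = 2 * Real.pi := div_mul_cancel₀ _ (ne_of_gt ht0)
  -- basic regularity
  have hKc : ContinuousOn K (Set.Ici 0) := hK.continuousOn
  have hK'c : ContinuousOn (derivWithin K (Set.Ici 0)) (Set.Ici 0) :=
    hK.continuousOn_derivWithin (uniqueDiffOn_Ici 0) le_rfl
  have hKd : DifferentiableOn ℝ K (Set.Ici 0) := hK.differentiableOn one_ne_zero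
  -- sup bounds
  have hsub : ∀ s : ℝ, 0 ≤ s → Set.Icc s (s + 1) ⊆ Set.Ici 0 := by
    intro s hs x hx
    exact le_trans hs hx.1
  have hM₀le : ∀ s : ℝ, 0 ≤ s → ∀ ρ ∈ Set.Icc s (s + 1), ‖K ρ‖ ≤ M₀ s := by
    intro s hs ρ hρ
    exact le_csSup (isCompact_Icc.bddAbove_image ((hKc.mono (hsub s hs)).norm))
      (Set.mem_image_of_mem _ hρ)
  have hM₁le : ∀ s : ℝ, 0 ≤ s → ∀ ρ ∈ Set.Icc s (s + 1),
      ‖derivWithin K (Set.Ici 0) ρ‖ ≤ M₁ s := by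
    intro s hs ρ hρ
    exact le_csSup (isCompact_Icc.bddAbove_image ((hK'c.mono (hsub s hs)).norm))
      (Set.mem_image_of_mem _ hρ)
  have hM₀nonneg : ∀ s : ℝ, 0 ≤ M₀ s := by
    intro s
    apply Real.sSup_nonneg
    rintro x ⟨ρ, -, rfl⟩
    exact norm_nonneg _
  have hM₁nonneg : ∀ s : ℝ, 0 ≤ M₁ s := by
    intro s
    apply Real.sSup_nonneg
    rintro x ⟨ρ, -, rfl⟩
    exact norm_nonneg _
  have hS0 : 0 ≤ S :=
    le_trans (norm_nonneg (K 1)) (le_csSup hbdd ⟨1, ⟨one_pos, le_rfl⟩, rfl⟩)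
  have hIv0 : 0 ≤ Iv := by
    apply integral_nonneg
    intro s
    exact mul_nonneg (Real.rpow_nonneg (hM₀nonneg s) _) (Real.rpow_nonneg (hM₁nonneg s) _)
  -- the oscillating factor
  set f : ℝ → ℂ := fun s => Complex.exp (-Complex.I * s * t / 2) * K s with hfdef
  set e : ℝ → ℂ := fun s => Complex.exp (-Complex.I * s * t / 2) with hedef
  have hfe : ∀ s : ℝ, f s = e s * K s := fun s => rfl
  have hexp : ∀ s : ℝ, ‖e s‖ = 1 := by
    intro s
    simp [hedef, Complex.norm_exp]
  have hecont : Continuous e := by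
    rw [hedef]
    apply Complex.continuous_exp.comp
    fun_prop
  set g : ℝ → ℂ := fun s => e s * K (s + h) with hgdef
  -- integrability
  have hfi : IntegrableOn f (Set.Ioi 0) :=
    hKint.bdd_mul (c := 1) hecont.aestronglyMeasurable (Filter.Eventually.of_forall fun s => le_of_eq (hexp s))
  have hpre : (fun x : ℝ => x + h) ⁻¹' (Set.Ioi h) = Set.Ioi 0 := by
    ext x
    simp
  have hKh_int : IntegrableOn (fun s => K (s + h)) (Set.Ioi 0) := by
    have h1' : IntegrableOn K (Set.Ioi h) := hKint.mono_set (Set.Ioi_subset_Ioi h0.le)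
    have h2' : IntegrableOn K (Set.Ioi h) (volume.map (fun x : ℝ => x + h)) := by
      rwa [(measurePreserving_add_right volume h).map_eq]
    have := (measurableEmbedding_addRight h).integrableOn_map_iff.1 h2'
    rwa [hpre] at this
  have hgi : IntegrableOn g (Set.Ioi 0) :=
    hKh_int.bdd_mul (c := 1) hecont.aestronglyMeasurable (Filter.Eventually.of_forall fun s => le_of_eq (hexp s))
  -- shift identity
  have hshift : ∫ s in Set.Ioi h, f s = ∫ s in Set.Ioi (0 : ℝ), f (s + h) := by
    rw [← hpre]
    exact ((measurePreserving_add_right volume h).setIntegral_preimage_emb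
      (measurableEmbedding_addRight h) f (Set.Ioi h)).symm
  have hfh : ∀ s : ℝ, f (s + h) = -g s := by
    intro s
    have harg : (-Complex.I * (↑(s + h)) * (t : ℂ) / 2) =
        (-Complex.I * s * t / 2) + (-(↑Real.pi * Complex.I)) := by
      have : (h : ℂ) * (t : ℂ) = 2 * (Real.pi : ℂ) := by
        exact_mod_cast congrArg (fun x : ℝ => (x : ℂ)) hht
      push_cast
      linear_combination (-Complex.I / 2) * this
    have hexpneg : Complex.exp (-(↑Real.pi * Complex.I)) = -1 := by
      rw [Complex.exp_neg, Complex.exp_pi_mul_I]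
      norm_num
    show Complex.exp (-Complex.I * (↑(s + h)) * (t : ℂ) / 2) * K (s + h) = -(e s * K (s + h))
    rw [harg, Complex.exp_add, hexpneg]
    ring
  have key : ∫ s in Set.Ioi (0 : ℝ), f (s + h) = -∫ s in Set.Ioi (0 : ℝ), g s := by
    rw [← integral_neg]
    exact setIntegral_congr_fun measurableSet_Ioi fun s _ => hfh s
  -- split
  have hsplit : ∫ s in Set.Ioi (0 : ℝ), f s =
      (∫ s in Set.Ioc (0 : ℝ) h, f s) + ∫ s in Set.Ioi h, f s := by
    rw [← setIntegral_union (Set.Ioc_disjoint_Ioi le_rfl) measurableSet_Ioi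
      (hfi.mono_set Set.Ioc_subset_Ioi_self) (hfi.mono_set (Set.Ioi_subset_Ioi h0.le)),
      Set.Ioc_union_Ioi_eq_Ioi h0.le]
  set Φ : ℂ := ∫ s in Set.Ioi (0 : ℝ), f s with hΦdef
  set A : ℂ := ∫ s in Set.Ioc (0 : ℝ) h, f s with hAdef
  set B : ℂ := ∫ s in Set.Ioi (0 : ℝ), g s with hBdef
  set D : ℂ := ∫ s in Set.Ioi (0 : ℝ), (f s - g s) with hDdef
  have hΦAB : Φ = A - B := by
    rw [hsplit, hshift, key]
    ring
  have hDe : D = Φ - B := integral_sub hfi hgi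
  have htwo : Φ + Φ = A + D := by
    linear_combination hΦAB - hDe
  -- bound on A
  have hA : ‖A‖ ≤ S * h := by
    have hb : ∀ x ∈ Set.Ioc (0 : ℝ) h, ‖f x‖ ≤ S := by
      intro x hx
      have : ‖f x‖ = ‖K x‖ := by
        rw [hfdef]
        simp only [norm_mul]
        exact (congrArg (· * ‖K x‖) (hexp x)).trans (one_mul _)
      rw [this]
      exact le_csSup hbdd ⟨x, ⟨hx.1, le_trans hx.2 h1⟩, rfl⟩
    have := norm_setIntegral_le_of_norm_le_const (C := S)
      (by rw [Real.volume_Ioc]; exact ENNReal.ofReal_lt_top) hb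
    rwa [measureReal_def, Real.volume_Ioc, ENNReal.toReal_ofReal (by linarith), sub_zero] at this
  -- pointwise bound for the difference term
  have hdiff : ∀ s ∈ Set.Ioi (0 : ℝ),
      ‖f s - g s‖ ≤ Real.sqrt (2 * h) * (M₀ s ^ ((1 : ℝ) / 2) * M₁ s ^ ((1 : ℝ) / 2)) := by
    intro s hs
    have hs0 : (0 : ℝ) ≤ s := le_of_lt hs
    have hfg : f s - g s = e s * (K s - K (s + h)) := by
      rw [hfdef, hgdef]; ring
    have hnorm : ‖f s - g s‖ = ‖K s - K (s + h)‖ := by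
      rw [hfg, norm_mul, hexp s, one_mul]
    -- two bounds on the difference
    have hmem1 : s ∈ Set.Icc s (s + 1) := ⟨le_rfl, by linarith⟩
    have hmem2 : s + h ∈ Set.Icc s (s + 1) := ⟨by linarith, by linarith⟩
    have b0 : ‖K s - K (s + h)‖ ≤ 2 * M₀ s := by
      calc ‖K s - K (s + h)‖ ≤ ‖K s‖ + ‖K (s + h)‖ := norm_sub_le _ _
        _ ≤ M₀ s + M₀ s := add_le_add (hM₀le s hs0 s hmem1) (hM₀le s hs0 (s + h) hmem2)
        _ = 2 * M₀ s := by ring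
    have hIccsub : Set.Icc s (s + h) ⊆ Set.Ici (0 : ℝ) := fun x hx => le_trans hs0 hx.1
    have b1 : ‖K s - K (s + h)‖ ≤ M₁ s * h := by
      have hlt : s < s + h := by linarith
      have hder : ∀ x ∈ Set.Icc s (s + h), ‖derivWithin K (Set.Icc s (s + h)) x‖ ≤ M₁ s := by
        intro x hx
        rw [derivWithin_subset hIccsub ((uniqueDiffOn_Icc hlt) x hx) (hKd x (hIccsub hx))]
        exact hM₁le s hs0 x ⟨hx.1, le_trans hx.2 (by linarith)⟩
      have := Convex.norm_image_sub_le_of_norm_derivWithin_le (hKd.mono hIccsub) hder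
        (convex_Icc _ _) ⟨le_rfl, by linarith⟩ ⟨by linarith, le_rfl⟩
      rw [norm_sub_rev]
      calc ‖K (s + h) - K s‖ ≤ M₁ s * ‖s + h - s‖ := this
        _ = M₁ s * h := by rw [show s + h - s = h by ring, Real.norm_eq_abs, abs_of_pos h0]
    -- combine via geometric mean
    have hsq : ‖K s - K (s + h)‖ ≤ Real.sqrt ((2 * h) * (M₀ s * M₁ s)) := by
      rw [Real.le_sqrt (norm_nonneg _)
        (mul_nonneg (by positivity) (mul_nonneg (hM₀nonneg s) (hM₁nonneg s)))]
      calc ‖K s - K (s + h)‖ ^ 2 = ‖K s - K (s + h)‖ * ‖K s - K (s + h)‖ := sq _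
        _ ≤ (2 * M₀ s) * (M₁ s * h) :=
            mul_le_mul b0 b1 (norm_nonneg _) (by linarith [hM₀nonneg s])
        _ = (2 * h) * (M₀ s * M₁ s) := by ring
    rw [hnorm]
    calc ‖K s - K (s + h)‖ ≤ Real.sqrt ((2 * h) * (M₀ s * M₁ s)) := hsq
      _ = Real.sqrt (2 * h) * (M₀ s ^ ((1 : ℝ) / 2) * M₁ s ^ ((1 : ℝ) / 2)) := by
          rw [Real.sqrt_mul (by positivity : (0:ℝ) ≤ 2 * h), Real.sqrt_mul (hM₀nonneg s),
            ← Real.sqrt_eq_rpow, ← Real.sqrt_eq_rpow]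
  -- bound on D
  have hD : ‖D‖ ≤ Real.sqrt (2 * h) * Iv := by
    have hgint : Integrable (fun s => Real.sqrt (2 * h) *
        (M₀ s ^ ((1 : ℝ) / 2) * M₁ s ^ ((1 : ℝ) / 2)))
        (volume.restrict (Set.Ioi (0 : ℝ))) := by
      exact hMint'.const_mul (Real.sqrt (2 * h))
    have hae : ∀ᵐ s ∂(volume.restrict (Set.Ioi (0 : ℝ))),
        ‖f s - g s‖ ≤ Real.sqrt (2 * h) * (M₀ s ^ ((1 : ℝ) / 2) * M₁ s ^ ((1 : ℝ) / 2)) := by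
      filter_upwards [ae_restrict_mem measurableSet_Ioi] with s hs
      exact hdiff s hs
    have := norm_integral_le_of_norm_le hgint hae
    calc ‖D‖ ≤ ∫ s in Set.Ioi (0 : ℝ),
          Real.sqrt (2 * h) * (M₀ s ^ ((1 : ℝ) / 2) * M₁ s ^ ((1 : ℝ) / 2)) := this
      _ = Real.sqrt (2 * h) * Iv := by
          rw [hIvM, ← integral_const_mul]
  -- put everything together
  have hnorm2 : 2 * ‖Φ‖ ≤ ‖A‖ + ‖D‖ := by
    have h1' : ‖Φ + Φ‖ ≤ ‖A‖ + ‖D‖ := by rw [htwo]; exact norm_add_le A D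
    have h2' : ‖Φ + Φ‖ = 2 * ‖Φ‖ := by
      have hh : Φ + Φ = (2 : ℂ) * Φ := by ring
      rw [hh, norm_mul]
      norm_num
    linarith
  -- numeric estimates
  set u : ℝ := Real.sqrt t with hudef
  have hu0 : 0 < u := Real.sqrt_pos.2 ht0
  have hu2 : u ^ 2 = t := Real.sq_sqrt ht0.le
  have hu_ge : 2 ≤ u := by
    nlinarith [Real.pi_gt_three]
  have hτ : t ^ (-(1 : ℝ) / 2) = u⁻¹ := by
    rw [show (-(1 : ℝ) / 2) = -(1 / 2) by norm_num, Real.rpow_neg ht0.le,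
      ← Real.sqrt_eq_rpow]
  have hpi4 := Real.pi_le_four
  have hSh : S * h ≤ (4 / u) * S := by
    have hh4 : h ≤ 4 / u := by
      rw [hdef, div_le_div_iff₀ ht0 hu0]
      nlinarith
    nlinarith [mul_le_mul_of_nonneg_left hh4 hS0]
  have hsq2h : Real.sqrt (2 * h) ≤ 4 / u := by
    have h2h : 2 * h = (4 * Real.pi) / t := by rw [hdef]; ring
    have hdiv : Real.sqrt ((4 * Real.pi) / t) = Real.sqrt (4 * Real.pi) / u := by
      rw [hudef, Real.sqrt_div (by positivity) t]
    have h16 : Real.sqrt (4 * Real.pi) ≤ 4 := by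
      have h1 : Real.sqrt (4 * Real.pi) ≤ Real.sqrt 16 := Real.sqrt_le_sqrt (by nlinarith)
      have h2 : Real.sqrt 16 = 4 := by
        rw [show (16 : ℝ) = 4 ^ 2 by norm_num, Real.sqrt_sq (by norm_num : (0:ℝ) ≤ 4)]
      linarith
    rw [h2h, hdiv]
    exact (div_le_div_iff_of_pos_right hu0).2 h16
  clear_value D B A Φ g f e u h M₁ M₀ Iv S
  have hDle : ‖D‖ ≤ (4 / u) * Iv :=
    le_trans hD (mul_le_mul_of_nonneg_right hsq2h hIv0)
  have hAle : ‖A‖ ≤ (4 / u) * S := le_trans hA hSh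
  rw [hτ]
  have he4 : 4 / u = 4 * u⁻¹ := by ring
  have hpos : (0 : ℝ) ≤ 4 * u⁻¹ * (S + Iv) := by positivity
  have hfinal : 2 * ‖Φ‖ ≤ 4 * u⁻¹ * (S + Iv) := by
    calc 2 * ‖Φ‖ ≤ ‖A‖ + ‖D‖ := hnorm2
      _ ≤ (4 / u) * S + (4 / u) * Iv := add_le_add hAle hDle
      _ = 4 * u⁻¹ * (S + Iv) := by rw [he4]; ring
  linarith
end

section
/- Let n and m be positive integers with m ≥ 2, let M ≥ 0 be an integer, and let A > 0. Suppose g : [0,∞) → ℂ is (M + 2m − 2)-times continuously differentiable, g^{(j)}(0) = 0 for 0 ≤ j ≤ 2m − 3, and |g^{(N)}(r)| ≤ A ⟨r⟩^{(n−3)/2 − N} for all r ≥ 0 and 0 ≤ N ≤ M + 2m − 2. Then the function F(r) := g(r)/r^{2m−2}, defined for r > 0, satisfies: there exists C > 0 (depending only on n, m, M, A) such that |F^{(N)}(r)| ≤ C ⟨r⟩^{(n+1)/2 − 2m − N} for all r > 0 and 0 ≤ N ≤ M. -/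
open Real Set

lemma iterWithin_eq_iter {f : ℝ → ℂ} {s : Set ℝ} (hs : Ioi (0:ℝ) ⊆ s) (N : ℕ) :
    ∀ r : ℝ, 0 < r → iteratedDerivWithin N f s r = iteratedDeriv N f r := by
  induction N with
  | zero => intro r hr; simp
  | succ N ih =>
    intro r hr
    have hmem : s ∈ nhds r := Filter.mem_of_superset (isOpen_Ioi.mem_nhds hr) hs
    rw [iteratedDerivWithin_succ,
      derivWithin_of_mem_nhds hmem, iteratedDeriv_succ]
    exact Filter.EventuallyEq.deriv_eq <|
      Filter.eventually_of_mem (isOpen_Ioi.mem_nhds hr) (fun x hx => ih x hx)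

lemma hasDerivAt_iter {f : ℝ → ℂ} {K : ℕ} (hf : ContDiffOn ℝ K f (Ioi 0)) {N : ℕ}
    (hN : N < K) {r : ℝ} (hr : 0 < r) :
    HasDerivAt (iteratedDeriv N f) (iteratedDeriv (N+1) f r) r := by
  have hd : DifferentiableOn ℝ (iteratedDerivWithin N f (Ioi 0)) (Ioi 0) :=
    hf.differentiableOn_iteratedDerivWithin (by exact_mod_cast hN) (uniqueDiffOn_Ioi 0)
  have h1 := ((hd r hr).hasDerivWithinAt).hasDerivAt (isOpen_Ioi.mem_nhds hr)
  have h2 : derivWithin (iteratedDerivWithin N f (Ioi 0)) (Ioi 0) r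
      = iteratedDeriv (N+1) f r := by
    rw [← iteratedDerivWithin_succ]
    exact iterWithin_eq_iter (le_refl _) (N+1) r hr
  rw [h2] at h1
  have heq : iteratedDerivWithin N f (Ioi 0) =ᶠ[nhds r] iteratedDeriv N f :=
    Filter.eventually_of_mem (isOpen_Ioi.mem_nhds hr) (fun x hx => iterWithin_eq_iter (le_refl _) N x hx)
  exact heq.hasDerivAt_iff.mp h1

lemma hasDerivAt_cpow_nat (k : ℕ) (r : ℝ) :
    HasDerivAt (fun t : ℝ => ((t:ℂ))^k) (k * (r:ℂ)^(k-1)) r :=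
  (hasDerivAt_pow k ((r:ℂ))).comp_ofReal

noncomputable def phi (h : ℝ → ℂ) (N : ℕ) (t : ℝ) : ℂ :=
  ∑ k ∈ Finset.range (N+1),
    ((-1:ℂ))^(N-k) / (Nat.factorial k) * (t:ℂ)^k * iteratedDeriv k h t

noncomputable def Wf (h : ℝ → ℂ) (N : ℕ) (t : ℝ) : ℕ → ℂ
  | 0 => 0
  | (k+1) => ((-1:ℂ))^(N-k) / (Nat.factorial k) * (t:ℂ)^k * iteratedDeriv (k+1) h t

lemma phi_succ (h : ℝ → ℂ) (N : ℕ) (t : ℝ) :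
    phi h (N+1) t = -phi h N t + (t:ℂ)^(N+1) * iteratedDeriv (N+1) h t / (Nat.factorial (N+1)) := by
  unfold phi
  rw [Finset.sum_range_succ]
  have h1 : ∀ k ∈ Finset.range (N+1),
      ((-1:ℂ))^(N+1-k) / (Nat.factorial k) * (t:ℂ)^k * iteratedDeriv k h t
      = -(((-1:ℂ))^(N-k) / (Nat.factorial k) * (t:ℂ)^k * iteratedDeriv k h t) := by
    intro k hk
    have hk' : k ≤ N := by simpa [Nat.lt_succ_iff] using hk
    have : N + 1 - k = (N - k) + 1 := by omega
    rw [this, pow_succ]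
    ring
  rw [Finset.sum_congr rfl h1, Finset.sum_neg_distrib]
  simp
  ring

lemma phi_hasDeriv {h : ℝ → ℂ} {K : ℕ} (hcd : ContDiffOn ℝ K h (Ioi 0)) {N : ℕ}
    (hN : N + 1 ≤ K) {t : ℝ} (ht : 0 < t) :
    HasDerivAt (phi h N) ((t:ℂ)^N * iteratedDeriv (N+1) h t / (Nat.factorial N)) t := by
  have key : ∀ k ∈ Finset.range (N+1),
      HasDerivAt (fun u : ℝ => ((-1:ℂ))^(N-k) / (Nat.factorial k) * (u:ℂ)^k * iteratedDeriv k h u)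
        (Wf h N t (k+1) - Wf h N t k) t := by
    intro k hk
    have hk' : k ≤ N := by simpa [Nat.lt_succ_iff] using hk
    have hpow : HasDerivAt (fun u : ℝ => ((-1:ℂ))^(N-k) / (Nat.factorial k) * (u:ℂ)^k)
        (((-1:ℂ))^(N-k) / (Nat.factorial k) * (k * (t:ℂ)^(k-1))) t :=
      (hasDerivAt_cpow_nat k t).const_mul _
    have hDk : HasDerivAt (iteratedDeriv k h) (iteratedDeriv (k+1) h t) t :=
      hasDerivAt_iter hcd (by omega) ht
    have := hpow.mul hDk
    convert this using 1
    · rfl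
    · rfl
    rcases k with _ | j
    · simp [Wf]
    · have hj : j + 1 ≤ N := hk'
      have hNj : N - j = (N - (j+1)) + 1 := by omega
      simp only [Wf]
      rw [hNj, pow_succ]
      have hfac : ((Nat.factorial (j+1) : ℂ)) = (j+1) * (Nat.factorial j) := by
        push_cast [Nat.factorial_succ]; ring
      rw [hfac]
      have h1 : ((Nat.factorial j : ℂ)) ≠ 0 := by
        exact_mod_cast Nat.factorial_ne_zero j
      have h2 : ((j:ℂ) + 1) ≠ 0 := by norm_cast
      simp only [Nat.add_sub_cancel]
      push_cast
      field_simp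
      ring
  have hsum := HasDerivAt.sum key
  have : (∑ k ∈ Finset.range (N+1), (Wf h N t (k+1) - Wf h N t k))
      = (t:ℂ)^N * iteratedDeriv (N+1) h t / (Nat.factorial N) := by
    rw [Finset.sum_range_sub (Wf h N t)]
    simp [Wf]
    ring
  rw [this] at hsum
  convert hsum using 1
  · rfl
  funext u
  simp [phi]

lemma leib {h : ℝ → ℂ} {K : ℕ} (hcd : ContDiffOn ℝ K h (Ioi 0)) {N : ℕ} (hN : N ≤ K) :
    ∀ r : ℝ, 0 < r → iteratedDeriv N (fun ρ : ℝ => h ρ / ρ) r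
      = (Nat.factorial N) * phi h N r / (r:ℂ)^(N+1) := by
  induction N with
  | zero =>
    intro r hr
    simp [phi]
  | succ N ih =>
    intro r hr
    rw [iteratedDeriv_succ]
    have heq : deriv (iteratedDeriv N (fun ρ : ℝ => h ρ / ρ)) r
        = deriv (fun t : ℝ => (Nat.factorial N : ℂ) * phi h N t / (t:ℂ)^(N+1)) r := by
      apply Filter.EventuallyEq.deriv_eq
      exact Filter.eventually_of_mem (isOpen_Ioi.mem_nhds hr)
        (fun x hx => ih (by omega) x hx)
    rw [heq]
    have hphi := phi_hasDeriv hcd (show N + 1 ≤ K by omega) hr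
    have hpow : HasDerivAt (fun t : ℝ => (t:ℂ)^(N+1)) ((N+1) * (r:ℂ)^N) r := by
      have := hasDerivAt_cpow_nat (N+1) r
      simpa using this
    have hrne : ((r:ℂ))^(N+1) ≠ 0 := pow_ne_zero _ (by exact_mod_cast hr.ne')
    have hd := (hphi.const_mul ((Nat.factorial N : ℂ))).div hpow hrne
    rw [show (fun t : ℝ => (Nat.factorial N : ℂ) * phi h N t / (t:ℂ)^(N+1)) = ((fun y => (Nat.factorial N : ℂ) * phi h N y) / fun t : ℝ => (t:ℂ)^(N+1)) from rfl, hd.deriv]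
    rw [phi_succ]
    have h1 : ((Nat.factorial N : ℂ)) ≠ 0 := by exact_mod_cast Nat.factorial_ne_zero N
    have h2 : ((Nat.factorial (N+1) : ℂ)) = (N+1) * (Nat.factorial N) := by
      push_cast [Nat.factorial_succ]; ring
    have hrne' : ((r:ℂ)) ≠ 0 := by exact_mod_cast hr.ne'
    have h3 : ((N:ℂ)+1) ≠ 0 := by norm_cast
    rw [h2]
    field_simp
    ring


lemma norm_phi_le (h : ℝ → ℂ) (N : ℕ) (t : ℝ) (ht : 0 ≤ t) :
    ‖phi h N t‖ ≤ ∑ k ∈ Finset.range (N+1), t^k * ‖iteratedDeriv k h t‖ := by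
  refine (norm_sum_le _ _).trans (Finset.sum_le_sum fun k _ => ?_)
  rw [norm_mul, norm_mul, norm_div, norm_pow, norm_neg, norm_one, one_pow]
  have h1 : ‖((Nat.factorial k : ℕ) : ℂ)‖ = (Nat.factorial k : ℝ) := by simp
  have h2 : ‖((t:ℂ))^k‖ = t^k := by
    rw [norm_pow]; simp [abs_of_nonneg ht]
  rw [h1, h2]
  have h3 : (1:ℝ) / (Nat.factorial k) ≤ 1 := by
    rw [div_le_one (by positivity)]
    exact_mod_cast Nat.one_le_iff_ne_zero.mpr (Nat.factorial_ne_zero k)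
  have h4 : (0:ℝ) ≤ t^k * ‖iteratedDeriv k h t‖ := by positivity
  calc 1 / (Nat.factorial k : ℝ) * t^k * ‖iteratedDeriv k h t‖
      = (1 / (Nat.factorial k : ℝ)) * (t^k * ‖iteratedDeriv k h t‖) := by ring
    _ ≤ 1 * (t^k * ‖iteratedDeriv k h t‖) := by
        exact mul_le_mul_of_nonneg_right h3 h4
    _ = _ := by ring

-- sqrt facts
lemma sq_facts (r : ℝ) (hr : 0 < r) :
    0 < Real.sqrt (1 + r^2) ∧ 1 ≤ Real.sqrt (1 + r^2) ∧ r ≤ Real.sqrt (1 + r^2) := by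
  have h1 : (1:ℝ) ≤ 1 + r^2 := by nlinarith
  have h2 : 1 ≤ Real.sqrt (1 + r^2) := by
    rw [show (1:ℝ) = Real.sqrt 1 by simp]
    exact Real.sqrt_le_sqrt (by simpa using h1)
  refine ⟨by linarith, h2, ?_⟩
  have : r = Real.sqrt (r^2) := by rw [Real.sqrt_sq hr.le]
  rw [this]
  exact Real.sqrt_le_sqrt (by nlinarith)

lemma sq_le_two_mul (r : ℝ) (hr : 1 ≤ r) : Real.sqrt (1 + r^2) ≤ 2 * r := by
  have : Real.sqrt (1 + r^2) ≤ Real.sqrt ((2*r)^2) := Real.sqrt_le_sqrt (by nlinarith)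
  rwa [Real.sqrt_sq (by linarith)] at this
lemma stepBig {h : ℝ → ℂ} {K : ℕ} {e C : ℝ} (hC : 0 < C)
    (hcd : ContDiffOn ℝ (K+1 : ℕ) h (Ioi 0))
    (hbig : ∀ r : ℝ, 1 ≤ r → ∀ N : ℕ, N ≤ K + 1 →
      ‖iteratedDeriv N h r‖ ≤ C * Real.sqrt (1 + r^2) ^ (e - N)) :
    ∀ r : ℝ, 1 ≤ r → ∀ N : ℕ, N ≤ K →
      ‖iteratedDeriv N (fun ρ : ℝ => h ρ / ρ) r‖ ≤
        (C * (Nat.factorial K) * (K+1) * 2^(K+1)) * Real.sqrt (1 + r^2) ^ ((e-1) - N) := by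
  intro r hr N hN
  have hr0 : 0 < r := lt_of_lt_of_le one_pos hr
  obtain ⟨hs0, hs1, hsr⟩ := sq_facts r hr0
  set s := Real.sqrt (1 + r^2) with hs
  have hs2r : s ≤ 2 * r := sq_le_two_mul r hr
  rw [leib hcd (by omega) r hr0]
  have hnorm : ‖(Nat.factorial N : ℂ) * phi h N r / (r:ℂ)^(N+1)‖
      = (Nat.factorial N : ℝ) * ‖phi h N r‖ / r^(N+1) := by
    rw [norm_div, norm_mul, norm_pow]
    simp [abs_of_nonneg hr0.le]
  rw [hnorm]
  -- bound phi
  have hphi : ‖phi h N r‖ ≤ (N+1) * (C * s ^ e) := by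
    refine (norm_phi_le h N r hr0.le).trans ?_
    have hterm : ∀ k ∈ Finset.range (N+1),
        r^k * ‖iteratedDeriv k h r‖ ≤ C * s ^ e := by
      intro k hk
      have hk' : k ≤ N := by simpa [Nat.lt_succ_iff] using hk
      have hD := hbig r hr k (by omega)
      calc r^k * ‖iteratedDeriv k h r‖ ≤ s^k * (C * s ^ (e - k)) := by
            exact mul_le_mul (pow_le_pow_left₀ hr0.le hsr k) hD (norm_nonneg _) (by positivity)
        _ = C * (s ^ (k:ℝ) * s ^ (e - k)) := by rw [Real.rpow_natCast]; ring
        _ = C * s ^ e := by rw [← Real.rpow_add hs0]; norm_num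
    calc ∑ k ∈ Finset.range (N+1), r^k * ‖iteratedDeriv k h r‖
        ≤ ∑ _k ∈ Finset.range (N+1), C * s ^ e := Finset.sum_le_sum hterm
      _ = (N+1) * (C * s ^ e) := by
          rw [Finset.sum_const, Finset.card_range, nsmul_eq_mul]
          push_cast
          ring
  -- 1/r^{N+1} ≤ 2^{N+1} * s^{-(N+1)}
  have hrpow : s ^ (N+1) ≤ 2^(N+1) * r^(N+1) := by
    calc s ^ (N+1) ≤ (2*r)^(N+1) := pow_le_pow_left₀ (by positivity) hs2r _
      _ = 2^(N+1) * r^(N+1) := by rw [mul_pow]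
  have hkey : s ^ e / r^(N+1) ≤ 2^(N+1) * s ^ ((e-1) - N) := by
    have h1 : s ^ e = s ^ ((e-1) - N) * s ^ ((N:ℝ)+1) := by
      rw [← Real.rpow_add hs0]; ring_nf
    have h2 : s ^ ((N:ℝ)+1) = s ^ (N+1) := by
      rw [show ((N:ℝ)+1) = ((N+1 : ℕ) : ℝ) by push_cast; ring, Real.rpow_natCast]
    rw [h1, h2, div_le_iff₀ (by positivity)]
    calc s ^ ((e-1) - N) * s ^ (N+1) ≤ s ^ ((e-1) - N) * (2^(N+1) * r^(N+1)) := by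
          exact mul_le_mul_of_nonneg_left hrpow (by positivity)
      _ = 2^(N+1) * s ^ ((e-1) - N) * r^(N+1) := by ring
  calc (Nat.factorial N : ℝ) * ‖phi h N r‖ / r^(N+1)
      ≤ (Nat.factorial N : ℝ) * ((N+1) * (C * s ^ e)) / r^(N+1) := by
        apply div_le_div_of_nonneg_right ?_ (by positivity)
        exact mul_le_mul_of_nonneg_left hphi (by positivity)
    _ = (Nat.factorial N : ℝ) * (N+1) * C * (s ^ e / r^(N+1)) := by ring
    _ ≤ (Nat.factorial N : ℝ) * (N+1) * C * (2^(N+1) * s ^ ((e-1) - N)) := by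
        exact mul_le_mul_of_nonneg_left hkey (by positivity)
    _ = ((Nat.factorial N : ℝ) * (N+1) * 2^(N+1) * C) * s ^ ((e-1) - N) := by ring
    _ ≤ (C * (Nat.factorial K) * (K+1) * 2^(K+1)) * s ^ ((e-1) - N) := by
        apply mul_le_mul_of_nonneg_right ?_ (by positivity)
        have f1 : (Nat.factorial N : ℝ) ≤ (Nat.factorial K : ℝ) := by
          exact_mod_cast Nat.factorial_le hN
        have f2 : ((N:ℝ)+1) ≤ (K:ℝ)+1 := by exact_mod_cast Nat.succ_le_succ hN
        have f3 : (2:ℝ)^(N+1) ≤ 2^(K+1) := by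
          apply pow_le_pow_right₀ (by norm_num) (by omega)
        calc (Nat.factorial N : ℝ) * (N+1) * 2^(N+1) * C
            ≤ (Nat.factorial K : ℝ) * ((K:ℝ)+1) * 2^(K+1) * C := by
              apply mul_le_mul_of_nonneg_right ?_ hC.le
              apply mul_le_mul ?_ f3 (by positivity) (by positivity)
              apply mul_le_mul f1 f2 (by positivity) (by positivity)
          _ = C * (Nat.factorial K) * (K+1) * 2^(K+1) := by ring
lemma stepSmall {h : ℝ → ℂ} {K q : ℕ} {C : ℝ} (hq : 1 ≤ q) (hC : 0 < C)
    (hcd : ContDiffOn ℝ (K+1 : ℕ) h (Ioi 0))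
    (hsmall : ∀ r : ℝ, 0 < r → r ≤ 1 → ∀ N : ℕ, N ≤ K + 1 →
      ‖iteratedDeriv N h r‖ ≤ C * r ^ (q - N)) :
    ∀ r : ℝ, 0 < r → r ≤ 1 → ∀ N : ℕ, N ≤ K →
      ‖iteratedDeriv N (fun ρ : ℝ => h ρ / ρ) r‖ ≤ C * r ^ ((q - 1) - N) := by
  intro r hr0 hr1 N hN
  set E := N + (q - (N+1)) with hE
  have hA : ∀ ε : ℝ, 0 < ε → ε ≤ r → ‖phi h N ε‖ ≤ C * (N+1) * ε := by
    intro ε hε0 hεr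
    have hε1 : ε ≤ 1 := hεr.trans hr1
    refine (norm_phi_le h N ε hε0.le).trans ?_
    have hterm : ∀ k ∈ Finset.range (N+1), ε^k * ‖iteratedDeriv k h ε‖ ≤ C * ε := by
      intro k hk
      have hD := hsmall ε hε0 hε1 k (by simp at hk; omega)
      calc ε^k * ‖iteratedDeriv k h ε‖ ≤ ε^k * (C * ε ^ (q - k)) :=
            mul_le_mul_of_nonneg_left hD (by positivity)
        _ = C * ε ^ (k + (q - k)) := by rw [pow_add]; ring
        _ ≤ C * ε ^ 1 := by
            apply mul_le_mul_of_nonneg_left ?_ hC.le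
            exact pow_le_pow_of_le_one hε0.le hε1 (by omega)
        _ = C * ε := by ring
    calc ∑ k ∈ Finset.range (N+1), ε^k * ‖iteratedDeriv k h ε‖
        ≤ ∑ _k ∈ Finset.range (N+1), C * ε := Finset.sum_le_sum hterm
      _ = C * (N+1) * ε := by
          rw [Finset.sum_const, Finset.card_range, nsmul_eq_mul]
          push_cast; ring
  have hB : ∀ ε : ℝ, 0 < ε → ε < r →
      ‖phi h N r‖ ≤ ‖phi h N ε‖ + C / (Nat.factorial N) * r ^ (E+1) := by
    intro ε hε0 hεr
    have hderiv : ∀ t ∈ Icc ε r, HasDerivWithinAt (phi h N)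
        ((t:ℂ)^N * iteratedDeriv (N+1) h t / (Nat.factorial N)) (Icc ε r) t := by
      intro t ht
      exact (phi_hasDeriv hcd (by omega) (lt_of_lt_of_le hε0 ht.1)).hasDerivWithinAt
    have hbound : ∀ t ∈ Icc ε r, ‖(t:ℂ)^N * iteratedDeriv (N+1) h t / (Nat.factorial N)‖
        ≤ C / (Nat.factorial N) * r ^ E := by
      intro t ht
      have ht0 : 0 < t := lt_of_lt_of_le hε0 ht.1
      have htr : t ≤ r := ht.2
      have hD := hsmall t ht0 (htr.trans hr1) (N+1) (by omega)
      have heq : ‖(t:ℂ)^N * iteratedDeriv (N+1) h t / (Nat.factorial N)‖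
          = t^N * ‖iteratedDeriv (N+1) h t‖ / (Nat.factorial N) := by
        rw [norm_div, norm_mul, norm_pow]; simp [abs_of_nonneg ht0.le]
      rw [heq]
      calc t^N * ‖iteratedDeriv (N+1) h t‖ / (Nat.factorial N : ℝ)
          ≤ t^N * (C * t ^ (q - (N+1))) / (Nat.factorial N : ℝ) := by
            apply div_le_div_of_nonneg_right ?_ (by positivity)
            exact mul_le_mul_of_nonneg_left hD (by positivity)
        _ = C * t ^ E / (Nat.factorial N : ℝ) := by rw [hE, pow_add]; ring
        _ ≤ C * r ^ E / (Nat.factorial N : ℝ) := by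
            apply div_le_div_of_nonneg_right ?_ (by positivity)
            exact mul_le_mul_of_nonneg_left (pow_le_pow_left₀ ht0.le htr E) hC.le
        _ = C / (Nat.factorial N : ℝ) * r ^ E := by ring
    have hmvt := Convex.norm_image_sub_le_of_norm_hasDerivWithin_le hderiv hbound (convex_Icc ε r)
      (left_mem_Icc.mpr hεr.le) (right_mem_Icc.mpr hεr.le)
    have h1 : ‖phi h N r - phi h N ε‖ ≤ C / (Nat.factorial N) * r ^ E * (r - ε) := by
      simpa [abs_of_nonneg (by linarith : (0:ℝ) ≤ r - ε)] using hmvt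
    have h2 : C / (Nat.factorial N) * r ^ E * (r - ε) ≤ C / (Nat.factorial N) * r ^ (E+1) := by
      rw [pow_succ]
      have : C / (Nat.factorial N) * r ^ E * (r - ε) ≤ C / (Nat.factorial N) * r ^ E * r := by
        apply mul_le_mul_of_nonneg_left (by linarith) (by positivity)
      linarith [this]
    calc ‖phi h N r‖ = ‖phi h N ε + (phi h N r - phi h N ε)‖ := by
          rw [show phi h N ε + (phi h N r - phi h N ε) = phi h N r by ring]
      _ ≤ ‖phi h N ε‖ + ‖phi h N r - phi h N ε‖ := norm_add_le _ _
      _ ≤ ‖phi h N ε‖ + C / (Nat.factorial N) * r ^ (E+1) := by linarith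
  have hCr : ‖phi h N r‖ ≤ C / (Nat.factorial N) * r ^ (E+1) := by
    apply le_of_forall_pos_le_add
    intro δ hδ
    have hden : (0:ℝ) < C * (N+1) := by positivity
    set ε := min (r/2) (δ / (C * (N+1))) with hεdef
    have hε0 : 0 < ε := lt_min (by linarith) (by positivity)
    have hεr : ε < r := lt_of_le_of_lt (min_le_left _ _) (by linarith)
    have h1 := hB ε hε0 hεr
    have h2 := hA ε hε0 hεr.le
    have h3 : C * (N+1) * ε ≤ δ := by
      have hh : ε ≤ δ / (C * (N+1)) := min_le_right _ _
      rw [le_div_iff₀ hden] at hh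
      linarith
    linarith
  rw [leib hcd (by omega) r hr0]
  have hnorm : ‖(Nat.factorial N : ℂ) * phi h N r / (r:ℂ)^(N+1)‖
      = (Nat.factorial N : ℝ) * ‖phi h N r‖ / r^(N+1) := by
    rw [norm_div, norm_mul, norm_pow]
    simp [abs_of_nonneg hr0.le]
  rw [hnorm]
  have hsplit : E + 1 = ((q - 1) - N) + (N+1) := by omega
  have hfacpos : (0:ℝ) < (Nat.factorial N : ℝ) := by positivity
  calc (Nat.factorial N : ℝ) * ‖phi h N r‖ / r^(N+1)
      ≤ (Nat.factorial N : ℝ) * (C / (Nat.factorial N) * r ^ (E+1)) / r^(N+1) := by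
        apply div_le_div_of_nonneg_right ?_ (by positivity)
        exact mul_le_mul_of_nonneg_left hCr (by positivity)
    _ = C * r ^ (E+1) / r^(N+1) := by field_simp
    _ = C * r ^ ((q - 1) - N) := by
        rw [hsplit, pow_add]
        field_simp
lemma baseSmall {g : ℝ → ℂ} {KT T : ℕ} (hTK : T ≤ KT)
    (hg : ContDiffOn ℝ (KT : ℕ) g (Ici 0))
    (hg0 : ∀ j : ℕ, j ≤ T - 1 → iteratedDerivWithin j g (Ici 0) 0 = 0)
    {C₀ : ℝ}
    (hb : ∀ r : ℝ, 0 ≤ r → r ≤ 1 → ∀ N : ℕ, N ≤ KT →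
      ‖iteratedDerivWithin N g (Ici 0) r‖ ≤ C₀) :
    ∀ N : ℕ, N ≤ KT → ∀ r : ℝ, 0 ≤ r → r ≤ 1 →
      ‖iteratedDerivWithin N g (Ici 0) r‖ ≤ C₀ * r ^ (T - N) := by
  have hC₀ : 0 ≤ C₀ := le_trans (norm_nonneg _) (hb 0 le_rfl zero_le_one 0 (Nat.zero_le _))
  have main : ∀ d : ℕ, ∀ N : ℕ, N ≤ KT → KT ≤ N + d → ∀ r : ℝ, 0 ≤ r → r ≤ 1 →
      ‖iteratedDerivWithin N g (Ici 0) r‖ ≤ C₀ * r ^ (T - N) := by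
    intro d
    induction d with
    | zero =>
      intro N hN hN' r hr0 hr1
      have hNT : T - N = 0 := by omega
      rw [hNT, pow_zero, mul_one]
      exact hb r hr0 hr1 N hN
    | succ d ih =>
      intro N hN hN' r hr0 hr1
      by_cases hd : KT ≤ N + d
      · exact ih N hN hd r hr0 hr1
      by_cases hTN : T ≤ N
      · have hNT : T - N = 0 := by omega
        rw [hNT, pow_zero, mul_one]
        exact hb r hr0 hr1 N hN
      push_neg at hTN
      -- N < T ≤ KT, use MVT
      have hNK : N < KT := by omega
      have hdiff : DifferentiableOn ℝ (iteratedDerivWithin N g (Ici 0)) (Ici 0) :=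
        hg.differentiableOn_iteratedDerivWithin (by exact_mod_cast hNK) (uniqueDiffOn_Ici 0)
      have hderiv : ∀ t ∈ Icc (0:ℝ) r, HasDerivWithinAt (iteratedDerivWithin N g (Ici 0))
          (iteratedDerivWithin (N+1) g (Ici 0) t) (Icc 0 r) t := by
        intro t ht
        have ht' : t ∈ Ici (0:ℝ) := ht.1
        have h1 := (hdiff t ht').hasDerivWithinAt
        rw [← iteratedDerivWithin_succ] at h1
        exact h1.mono Icc_subset_Ici_self
      have hbound : ∀ t ∈ Icc (0:ℝ) r, ‖iteratedDerivWithin (N+1) g (Ici 0) t‖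
          ≤ C₀ * r ^ (T - (N+1)) := by
        intro t ht
        calc ‖iteratedDerivWithin (N+1) g (Ici 0) t‖
            ≤ C₀ * t ^ (T - (N+1)) :=
              ih (N+1) (by omega) (by omega) t ht.1 (ht.2.trans hr1)
          _ ≤ C₀ * r ^ (T - (N+1)) := by
              exact mul_le_mul_of_nonneg_left (pow_le_pow_left₀ ht.1 ht.2 _) hC₀
      have hmvt := Convex.norm_image_sub_le_of_norm_hasDerivWithin_le hderiv hbound
        (convex_Icc 0 r) (left_mem_Icc.mpr hr0) (right_mem_Icc.mpr hr0)
      rw [hg0 N (by omega), sub_zero] at hmvt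
      have : ‖r - 0‖ = r := by rw [sub_zero]; exact abs_of_nonneg hr0
      rw [this] at hmvt
      calc ‖iteratedDerivWithin N g (Ici 0) r‖ ≤ C₀ * r ^ (T - (N+1)) * r := hmvt
        _ = C₀ * r ^ (T - N) := by
            rw [show T - N = (T - (N+1)) + 1 by omega, pow_succ]; ring
  intro N hN r hr0 hr1
  exact main KT N hN (by omega) r hr0 hr1
theorem stmt_18 (n m : ℕ) (hn : 1 ≤ n) (hm : 2 ≤ m) (M : ℕ) (A : ℝ) (hA : 0 < A)
    (g : ℝ → ℂ) (hg : ContDiffOn ℝ (M + 2 * m - 2) g (Set.Ici 0))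
    (hg0 : ∀ j : ℕ, j ≤ 2 * m - 3 → iteratedDerivWithin j g (Set.Ici 0) 0 = 0)
    (hgb : ∀ r : ℝ, 0 ≤ r → ∀ N : ℕ, N ≤ M + 2 * m - 2 →
      ‖iteratedDerivWithin N g (Set.Ici 0) r‖ ≤
        A * Real.sqrt (1 + r ^ 2) ^ (((n : ℝ) - 3) / 2 - N)) :
    ∃ C > 0, ∀ r : ℝ, 0 < r → ∀ N : ℕ, N ≤ M →
      ‖iteratedDerivWithin N (fun ρ : ℝ => g ρ / (ρ : ℂ) ^ (2 * m - 2)) (Set.Ioi 0) r‖ ≤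
        C * Real.sqrt (1 + r ^ 2) ^ (((n : ℝ) + 1) / 2 - 2 * m - N) := by
  set KT := M + 2 * m - 2 with hKTdef
  set T := 2 * m - 2 with hTdef
  have hT2 : 2 ≤ T := by omega
  have hKT : KT = M + T := by omega
  have hgI : ContDiffOn ℝ (KT : ℕ) g (Set.Ici 0) := by exact_mod_cast hg
  have hconv : ∀ N : ℕ, ∀ r : ℝ, 0 < r →
      iteratedDerivWithin N g (Set.Ici 0) r = iteratedDeriv N g r :=
    fun N => iterWithin_eq_iter Ioi_subset_Ici_self N
  set C₀ : ℝ := A * 2 ^ ((n:ℝ)) with hC₀def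
  have hC₀pos : 0 < C₀ := by positivity
  -- bounds of sqrt for r ≤ 1
  have hsq : ∀ r : ℝ, 0 ≤ r → r ≤ 1 →
      1 ≤ Real.sqrt (1 + r^2) ∧ Real.sqrt (1 + r^2) ≤ 2 := by
    intro r hr0 hr1
    constructor
    · have h1 := Real.sqrt_le_sqrt (show (1:ℝ) ≤ 1 + r^2 by nlinarith)
      simpa using h1
    · have h2 : Real.sqrt (1 + r^2) ≤ Real.sqrt ((2:ℝ)^2) := Real.sqrt_le_sqrt (by nlinarith)
      rwa [Real.sqrt_sq (by norm_num : (0:ℝ) ≤ 2)] at h2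
  have hb01 : ∀ r : ℝ, 0 ≤ r → r ≤ 1 → ∀ N : ℕ, N ≤ KT →
      ‖iteratedDerivWithin N g (Set.Ici 0) r‖ ≤ C₀ := by
    intro r hr0 hr1 N hN
    refine (hgb r hr0 N hN).trans ?_
    obtain ⟨hs1, hs2⟩ := hsq r hr0 hr1
    have hexp : ((n:ℝ) - 3) / 2 - N ≤ (n:ℝ) := by
      have h1 : (0:ℝ) ≤ N := Nat.cast_nonneg N
      have h2 : (0:ℝ) ≤ n := Nat.cast_nonneg n
      linarith
    have : Real.sqrt (1 + r^2) ^ (((n:ℝ) - 3) / 2 - N) ≤ 2 ^ ((n:ℝ)) := by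
      calc Real.sqrt (1 + r^2) ^ (((n:ℝ) - 3) / 2 - N)
          ≤ Real.sqrt (1 + r^2) ^ ((n:ℝ)) :=
            Real.rpow_le_rpow_of_exponent_le hs1 hexp
        _ ≤ 2 ^ ((n:ℝ)) := Real.rpow_le_rpow (by positivity) hs2 (Nat.cast_nonneg n)
    calc A * Real.sqrt (1 + r^2) ^ (((n:ℝ) - 3) / 2 - N) ≤ A * 2 ^ ((n:ℝ)) :=
          mul_le_mul_of_nonneg_left this hA.le
      _ = C₀ := rfl
  have hbase := baseSmall (show T ≤ KT by omega) hgI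
    (fun j hj => hg0 j (by omega)) hb01
  -- main induction over number of divisions
  have claim : ∀ p : ℕ, p ≤ T → ∃ C : ℝ, 0 < C ∧
      (∀ r : ℝ, 1 ≤ r → ∀ N : ℕ, N ≤ M + (T - p) →
        ‖iteratedDeriv N (fun ρ : ℝ => g ρ / (ρ:ℂ)^p) r‖
          ≤ C * Real.sqrt (1 + r^2) ^ ((((n:ℝ)-3)/2 - p) - N)) ∧
      (∀ r : ℝ, 0 < r → r ≤ 1 → ∀ N : ℕ, N ≤ M + (T - p) →
        ‖iteratedDeriv N (fun ρ : ℝ => g ρ / (ρ:ℂ)^p) r‖ ≤ C * r ^ ((T - p) - N)) := by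
    intro p
    induction p with
    | zero =>
      intro _
      have heq : ∀ N r, iteratedDeriv N (fun ρ : ℝ => g ρ / (ρ:ℂ)^0) r
          = iteratedDeriv N g r := by
        intro N r; congr 1; funext ρ; simp
      refine ⟨C₀ + A, by positivity, ?_, ?_⟩
      · intro r hr N hN
        have hr0 : 0 < r := lt_of_lt_of_le one_pos hr
        rw [heq, ← hconv N r hr0]
        refine (hgb r hr0.le N (by omega)).trans ?_
        have hexp : (((n:ℝ)-3)/2 - ((0:ℕ):ℝ)) - N = ((n:ℝ)-3)/2 - N := by push_cast; ring
        rw [hexp]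
        exact mul_le_mul_of_nonneg_right (by linarith)
          (Real.rpow_nonneg (Real.sqrt_nonneg _) _)
      · intro r hr0 hr1 N hN
        rw [heq, ← hconv N r hr0]
        refine (hbase N (by omega) r hr0.le hr1).trans ?_
        have hTN : T - 0 = T := by omega
        rw [hTN]
        exact mul_le_mul_of_nonneg_right (by linarith) (pow_nonneg hr0.le _)
    | succ p ihp =>
      intro hp1
      obtain ⟨C, hC, hbigp, hsmallp⟩ := ihp (by omega)
      set K := M + (T - (p+1)) with hKdef
      have hKeq : M + (T - p) = K + 1 := by omega
      have hcdp : ContDiffOn ℝ ((K+1 : ℕ)) (fun ρ : ℝ => g ρ / (ρ:ℂ)^p) (Set.Ioi 0) := by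
        have h1 : ContDiffOn ℝ ((K+1:ℕ)) g (Set.Ioi 0) :=
          (hgI.mono Set.Ioi_subset_Ici_self).of_le
            (by exact_mod_cast (show K + 1 ≤ KT by omega))
        have h2 : ContDiffOn ℝ ((K+1:ℕ)) (fun ρ : ℝ => ((ρ:ℂ)^p)⁻¹) (Set.Ioi 0) :=
          ((Complex.ofRealCLM.contDiff.pow p).contDiffOn).inv
            (fun x hx => pow_ne_zero _ (Complex.ofReal_ne_zero.mpr (ne_of_gt hx)))
        simpa only [div_eq_mul_inv] using h1.mul h2
      rw [hKeq] at hbigp hsmallp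
      have Hbig := stepBig hC hcdp hbigp
      have Hsmall := stepSmall (show 1 ≤ T - p by omega) hC hcdp hsmallp
      have hfun : (fun ρ : ℝ => (g ρ / (ρ:ℂ)^p) / (ρ:ℂ)) = fun ρ : ℝ => g ρ / (ρ:ℂ)^(p+1) := by
        funext ρ; rw [div_div, ← pow_succ]
      simp only [hfun] at Hbig Hsmall
      refine ⟨C * (Nat.factorial K) * (K+1) * 2^(K+1) + C, by positivity, ?_, ?_⟩
      · intro r hr N hN
        have h1 := Hbig r hr N (by omega)
        have hexp : ((((n:ℝ)-3)/2 - (p:ℝ)) - 1) - (N:ℝ) = (((n:ℝ)-3)/2 - ((p+1:ℕ):ℝ)) - (N:ℝ) := by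
          push_cast; ring
        rw [hexp] at h1
        refine h1.trans ?_
        refine mul_le_mul_of_nonneg_right ?_ (Real.rpow_nonneg (Real.sqrt_nonneg _) _)
        linarith
      · intro r hr0 hr1 N hN
        have h1 := Hsmall r hr0 hr1 N (by omega)
        have hsub : T - p - 1 = T - (p+1) := by omega
        rw [hsub] at h1
        refine h1.trans ?_
        refine mul_le_mul_of_nonneg_right ?_ (pow_nonneg hr0.le _)
        have : (0:ℝ) < C * (Nat.factorial K) * (K+1) * 2^(K+1) := by positivity
        linarith
  obtain ⟨C, hC, hbigT, hsmallT⟩ := claim T le_rfl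
  set B : ℝ := (n:ℝ) + 2*m + M with hBdef
  have hB0 : (0:ℝ) ≤ B := by
    have h1 : (0:ℝ) ≤ n := Nat.cast_nonneg n
    have h2 : (0:ℝ) ≤ m := Nat.cast_nonneg m
    have h3 : (0:ℝ) ≤ M := Nat.cast_nonneg M
    rw [hBdef]; linarith
  refine ⟨C * 2 ^ B + C, by positivity, ?_⟩
  intro r hr0 N hN
  rw [iterWithin_eq_iter (le_refl _) N r hr0]
  have hNT : N ≤ M + (T - T) := by omega
  have hTr : (T:ℝ) = 2*(m:ℝ) - 2 := by
    rw [hTdef]; push_cast [Nat.cast_sub (show 2 ≤ 2*m by omega)]; ring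
  have hexpG : (((n:ℝ)+1)/2 - 2*(m:ℝ) - (N:ℝ)) = (((n:ℝ)-3)/2 - (T:ℝ)) - (N:ℝ) := by
    rw [hTr]; ring
  rcases le_or_gt 1 r with hr1 | hr1
  · have h1 := hbigT r hr1 N hNT
    rw [hexpG]
    refine h1.trans ?_
    refine mul_le_mul_of_nonneg_right ?_ (Real.rpow_nonneg (Real.sqrt_nonneg _) _)
    have : (0:ℝ) < C * 2 ^ B := by positivity
    linarith
  · have h1 := hsmallT r hr0 hr1.le N hNT
    have h2 : r ^ ((T - T) - N) = 1 := by
      rw [show (T - T) - N = 0 by omega, pow_zero]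
    rw [h2, mul_one] at h1
    refine h1.trans ?_
    obtain ⟨hs1, hs2⟩ := hsq r hr0.le hr1.le
    set s := Real.sqrt (1 + r^2) with hsdef
    have hspos : 0 < s := lt_of_lt_of_le one_pos hs1
    set X : ℝ := ((n:ℝ)+1)/2 - 2*(m:ℝ) - (N:ℝ) with hXdef
    have hXB : -X ≤ B := by
      have h1' : (0:ℝ) ≤ n := Nat.cast_nonneg n
      have h2' : (N:ℝ) ≤ (M:ℝ) := Nat.cast_le.mpr hN
      rw [hXdef, hBdef]; linarith
    have hs_pow : s ^ (-X) ≤ 2 ^ B := by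
      calc s ^ (-X) ≤ s ^ B := Real.rpow_le_rpow_of_exponent_le hs1 hXB
        _ ≤ 2 ^ B := Real.rpow_le_rpow hspos.le hs2 hB0
    have hXpos : 0 < s ^ X := Real.rpow_pos_of_pos hspos X
    calc C = (C * s ^ (-X)) * s ^ X := by
          rw [mul_assoc, ← Real.rpow_add hspos]; simp
      _ ≤ (C * 2 ^ B) * s ^ X :=
          mul_le_mul_of_nonneg_right (mul_le_mul_of_nonneg_left hs_pow hC.le) hXpos.le
      _ ≤ (C * 2 ^ B + C) * s ^ X :=
          mul_le_mul_of_nonneg_right (by linarith) hXpos.le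
end
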